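/- arXiv:1102.1984 — 7 statements merged into one kernel-verified Lean document; each statement's English description precedes it below -/
import Mathlib

section
/- Let n ≥ 2 and 1 ≤ i ≤ n, and let α ∈ P_i. Then there exists a unique π ∈ P_{i−1} such that |α ∩ π| = n − 1 and |(α ⊖ 2) ∩ π| = n − 1. -/
/-!
Common definitions: stable n-sets in `ZMod (2*n+2)`, tight/loose sets, shifts,
outer neighbors, parity, the sets `P_i`, and adjacency in the stable Kneser
graph `SG_{n,2}` (two stable n-sets are adjacent iff they are disjoint).
-/

instance (n : ℕ) : NeZero (2 * n + 2) := ⟨by omega⟩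

/-- A stable n-set: a finite subset of `ZMod (2n+2)` of cardinality `n`
containing no two (cyclically) consecutive elements. -/
def IsStable (n : ℕ) (α : Finset (ZMod (2 * n + 2))) : Prop :=
  α.card = n ∧ ∀ i : ZMod (2 * n + 2), ¬(i ∈ α ∧ i + 1 ∈ α)

/-- A set is tight if it has the form `{i, i+2, i+4, …, i+2(n-1)}`. -/
def IsTight (n : ℕ) (α : Finset (ZMod (2 * n + 2))) : Prop :=
  ∃ i : ZMod (2 * n + 2), α = (Finset.range n).image (fun k : ℕ => i + 2 * (k : ZMod (2 * n + 2)))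

/-- `α ⊕ j`, the shift of `α` by `j`. -/
def oplus (n : ℕ) (α : Finset (ZMod (2 * n + 2))) (j : ZMod (2 * n + 2)) :
    Finset (ZMod (2 * n + 2)) :=
  α.image (fun a => a + j)

/-- `α ⊖ j`, the shift of `α` by `-j`. -/
def ominus (n : ℕ) (α : Finset (ZMod (2 * n + 2))) (j : ZMod (2 * n + 2)) :
    Finset (ZMod (2 * n + 2)) :=
  α.image (fun a => a - j)

/-- `β` is an outer neighbor of `α`: they are disjoint and
`β = ((α \ {a}) ⊕ 1) ∪ {a + 2}` for some `a ∈ α`. -/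
def OuterNbr (n : ℕ) (α β : Finset (ZMod (2 * n + 2))) : Prop :=
  Disjoint α β ∧ ∃ a ∈ α, β = oplus n (α.erase a) 1 ∪ {a + 2}

/-- The parity of an element of `ZMod (2n+2)`: its image in `ZMod 2` under the
natural ring homomorphism. -/
def parity (n : ℕ) (a : ZMod (2 * n + 2)) : ZMod 2 :=
  ZMod.castHom (show (2 : ℕ) ∣ 2 * n + 2 from ⟨n + 1, by ring⟩) (ZMod 2) a

/-- Adjacency in the stable Kneser graph `SG_{n,2}`: two distinct stable n-sets
are adjacent iff they are disjoint. -/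
def SGAdj (n : ℕ) (α β : Finset (ZMod (2 * n + 2))) : Prop :=
  IsStable n α ∧ IsStable n β ∧ α ≠ β ∧ Disjoint α β

/-- `P_i`: stable n-sets with exactly `i` even elements and `n - i` odd elements. -/
def Pset (n i : ℕ) : Set (Finset (ZMod (2 * n + 2))) :=
  {α | IsStable n α ∧ (α.filter fun a => parity n a = 0).card = i ∧
       (α.filter fun a => parity n a = 1).card = n - i}
-- auxiliary lemmas
lemma zmod2_cases (p : ZMod 2) : p = 0 ∨ p = 1 := by revert p; decide

lemma parity_add_one (n : ℕ) (x : ZMod (2*n+2)) : parity n (x+1) = parity n x + 1 := by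
  unfold parity; rw [map_add, map_one]

lemma parity_add_two (n : ℕ) (x : ZMod (2*n+2)) : parity n (x+2) = parity n x := by
  unfold parity
  rw [show (2 : ZMod (2*n+2)) = 1 + 1 by norm_num, map_add, map_add, map_one,
    show (1 + 1 : ZMod 2) = 0 from rfl, add_zero]

lemma const_ne_zero {n k : ℕ} (h0 : 0 < k) (hk : k < 2*n+2) : ((k:ℕ) : ZMod (2*n+2)) ≠ 0 := by
  intro h
  rw [ZMod.natCast_eq_zero_iff] at h
  exact absurd (Nat.le_of_dvd h0 h) (by omega)

lemma one_ne (n : ℕ) : (1 : ZMod (2*n+2)) ≠ 0 := by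
  have := const_ne_zero (n := n) (k := 1) (by norm_num) (by omega)
  simpa using this

lemma two_ne (n : ℕ) (hn : 1 ≤ n) : (2 : ZMod (2*n+2)) ≠ 0 := by
  have := const_ne_zero (n := n) (k := 2) (by norm_num) (by omega)
  simpa using this

lemma four_ne (n : ℕ) (hn : 2 ≤ n) : (4 : ZMod (2*n+2)) ≠ 0 := by
  have := const_ne_zero (n := n) (k := 4) (by norm_num) (by omega)
  simpa using this

lemma exists_boundary {n : ℕ} {α : Finset (ZMod (2*n+2))} (hcard : α.card = n)
    {x0 : ZMod (2*n+2)} (hx0 : x0 ∈ α) :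
    ∃ a ∈ α, parity n a = parity n x0 ∧ a + 2 ∉ α := by
  by_contra hcon
  push_neg at hcon
  have key : ∀ k : ℕ, x0 + 2 * ((k:ℕ) : ZMod (2*n+2)) ∈ α ∧
      parity n (x0 + 2 * ((k:ℕ) : ZMod (2*n+2))) = parity n x0 := by
    intro k
    induction k with
    | zero => simpa using hx0
    | succ k ih =>
      have hstep : x0 + 2*(((k+1 : ℕ)) : ZMod (2*n+2)) = (x0 + 2*((k:ℕ) : ZMod (2*n+2))) + 2 := by
        push_cast; ring
      rw [hstep, parity_add_two]
      exact ⟨hcon _ ih.1 ih.2, ih.2⟩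
  have hsub : (Finset.range (n+1)).image (fun k : ℕ => x0 + 2*((k:ℕ) : ZMod (2*n+2))) ⊆ α := by
    intro x hx
    obtain ⟨k, _, rfl⟩ := Finset.mem_image.mp hx
    exact (key k).1
  have hinj : Set.InjOn (fun k : ℕ => x0 + 2*((k:ℕ) : ZMod (2*n+2))) (Finset.range (n+1)) := by
    intro j hj k hk h
    simp only [Finset.coe_range, Set.mem_Iio] at hj hk
    dsimp only at h
    have h2 : ((2*j : ℕ) : ZMod (2*n+2)) = ((2*k : ℕ) : ZMod (2*n+2)) := by
      push_cast
      exact add_left_cancel h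
    have hj2 : ((2*j : ℕ) : ZMod (2*n+2)).val = 2*j := ZMod.val_cast_of_lt (by omega)
    have hk2 : ((2*k : ℕ) : ZMod (2*n+2)).val = 2*k := ZMod.val_cast_of_lt (by omega)
    have : 2*j = 2*k := by rw [← hj2, ← hk2, h2]
    omega
  have hle := Finset.card_le_card hsub
  rw [Finset.card_image_of_injOn hinj, Finset.card_range, hcard] at hle
  omega

def Tset (n : ℕ) (α : Finset (ZMod (2*n+2))) : Finset (ZMod (2*n+2)) :=
  (α ∪ α.image (· + 1))ᶜ

lemma mem_Tset {n : ℕ} {α : Finset (ZMod (2*n+2))} {t : ZMod (2*n+2)} :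
    t ∈ Tset n α ↔ t ∉ α ∧ t - 1 ∉ α := by
  unfold Tset
  rw [Finset.mem_compl, Finset.mem_union, Finset.mem_image]
  constructor
  · intro h
    push_neg at h
    exact ⟨h.1, fun hc => h.2 _ hc (by ring)⟩
  · rintro ⟨h1, h2⟩ hc
    rcases hc with hc | ⟨y, hy, rfl⟩
    · exact h1 hc
    · exact h2 (by simpa using hy)

lemma card_Tset {n : ℕ} {α : Finset (ZMod (2*n+2))} (hcard : α.card = n)
    (hstab : ∀ i : ZMod (2*n+2), ¬(i ∈ α ∧ i + 1 ∈ α)) : (Tset n α).card = 2 := by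
  have hdisj : Disjoint α (α.image (· + 1)) := by
    rw [Finset.disjoint_left]
    rintro x hx hx'
    rw [Finset.mem_image] at hx'
    obtain ⟨y, hy, rfl⟩ := hx'
    exact hstab y ⟨hy, hx⟩
  have hcu : (α ∪ α.image (· + 1)).card = 2*n := by
    rw [Finset.card_union_of_disjoint hdisj,
      Finset.card_image_of_injective _ (add_left_injective 1), hcard]
    ring
  unfold Tset
  rw [Finset.card_compl, hcu]
  have hfc : Fintype.card (ZMod (2*n+2)) = 2*n+2 := ZMod.card _
  omega

lemma evens_card (n : ℕ) :
    (Finset.univ.filter fun x : ZMod (2*n+2) => parity n x = 0).card = n + 1 := by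
  have htot : (Finset.univ.filter fun x : ZMod (2*n+2) => parity n x = 0).card
      + (Finset.univ.filter fun x : ZMod (2*n+2) => parity n x = 1).card = 2*n+2 := by
    have h1 := Finset.card_filter_add_card_filter_not
      (s := (Finset.univ : Finset (ZMod (2*n+2)))) (p := fun x => parity n x = 0)
    have h2 : Finset.univ.filter (fun x : ZMod (2*n+2) => ¬ parity n x = 0)
        = Finset.univ.filter (fun x : ZMod (2*n+2) => parity n x = 1) := by
      apply Finset.filter_congr
      intro x _
      rcases zmod2_cases (parity n x) with h | h <;> rw [h] <;> simp
    rw [h2] at h1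
    rwa [Finset.card_univ, ZMod.card] at h1
  have himg : (Finset.univ.filter fun x : ZMod (2*n+2) => parity n x = 0).image (· + 1)
      = Finset.univ.filter fun x : ZMod (2*n+2) => parity n x = 1 := by
    ext y
    rw [Finset.mem_image]
    simp only [Finset.mem_filter, Finset.mem_univ, true_and]
    constructor
    · rintro ⟨x, hx, rfl⟩
      rw [parity_add_one, hx]
      decide
    · intro hy
      refine ⟨y - 1, ?_, sub_add_cancel y 1⟩
      rcases zmod2_cases (parity n (y-1)) with h | h
      · exact h
      · exfalso
        have hthis := parity_add_one n (y-1)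
        rw [sub_add_cancel, h, hy] at hthis
        exact absurd hthis (by decide)
  have hcards : (Finset.univ.filter fun x : ZMod (2*n+2) => parity n x = 0).card
      = (Finset.univ.filter fun x : ZMod (2*n+2) => parity n x = 1).card := by
    rw [← himg, Finset.card_image_of_injective _ (add_left_injective 1)]
  omega

/-- For `α ∈ P_i` with `1 ≤ i ≤ n`, there is a unique `π ∈ P_{i-1}` with
`|α ∩ π| = n - 1` and `|(α ⊖ 2) ∩ π| = n - 1`. -/
theorem unique_lower_neighbor (n i : ℕ) (hn : 2 ≤ n) (hi1 : 1 ≤ i) (hi2 : i ≤ n)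
    (α : Finset (ZMod (2 * n + 2))) (hα : α ∈ Pset n i) :
    ∃! π : Finset (ZMod (2 * n + 2)), π ∈ Pset n (i - 1) ∧
      (α ∩ π).card = n - 1 ∧ ((ominus n α 2) ∩ π).card = n - 1 := by
  obtain ⟨⟨hcard, hstab⟩, hev, hod⟩ := hα
  -- the even boundary `a`
  have hevne : (α.filter fun x => parity n x = 0).Nonempty := by
    rw [← Finset.card_pos, hev]; omega
  obtain ⟨x0, hx0⟩ := hevne
  rw [Finset.mem_filter] at hx0
  obtain ⟨a, haα, hapar, habd⟩ := exists_boundary hcard hx0.1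
  rw [hx0.2] at hapar
  have ha1 : a + 1 ∉ α := fun h => hstab a ⟨haα, h⟩
  set π : Finset (ZMod (2*n+2)) := insert (a+1) (α.erase a) with hπdef
  have ha1e : a + 1 ∉ α.erase a := fun h => ha1 (Finset.mem_of_mem_erase h)
  have hπcard : π.card = n := by
    rw [hπdef, Finset.card_insert_of_notMem ha1e, Finset.card_erase_of_mem haα, hcard]
    omega
  have hπstab : ∀ x : ZMod (2*n+2), ¬(x ∈ π ∧ x + 1 ∈ π) := by
    rintro x ⟨hx, hx1⟩
    rw [hπdef, Finset.mem_insert, Finset.mem_erase] at hx hx1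
    rcases hx with rfl | ⟨hxa, hxα⟩
    · rcases hx1 with h | ⟨_, h⟩
      · exact one_ne n (by linear_combination h)
      · exact habd (by rwa [show a+1+1 = a+2 by ring] at h)
    · rcases hx1 with h | ⟨_, h⟩
      · exact hxa (by linear_combination h)
      · exact hstab x ⟨hxα, h⟩
  have hπev : (π.filter fun x => parity n x = 0).card = i - 1 := by
    rw [hπdef, Finset.filter_insert, if_neg (by rw [parity_add_one, hapar]; decide),
      Finset.filter_erase, Finset.card_erase_of_mem (Finset.mem_filter.mpr ⟨haα, hapar⟩), hev]
  have hπod : (π.filter fun x => parity n x = 1).card = n - (i - 1) := by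
    rw [hπdef, Finset.filter_insert, if_pos (by rw [parity_add_one, hapar]; decide),
      Finset.filter_erase,
      Finset.erase_eq_of_notMem (fun hc => by
        have h := (Finset.mem_filter.mp hc).2
        rw [hapar] at h
        exact absurd h (by decide)),
      Finset.card_insert_of_notMem (fun hc => ha1 (Finset.mem_filter.mp hc).1), hod]
    omega
  have hinter : α ∩ π = α.erase a := by
    ext x
    simp only [Finset.mem_inter, hπdef, Finset.mem_insert, Finset.mem_erase]
    constructor
    · rintro ⟨hxα, rfl | ⟨hxa, _⟩⟩
      · exact absurd hxα ha1
      · exact ⟨hxa, hxα⟩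
    · rintro ⟨hxa, hxα⟩
      exact ⟨hxα, Or.inr ⟨hxa, hxα⟩⟩
  have hintercard : (α ∩ π).card = n - 1 := by
    rw [hinter, Finset.card_erase_of_mem haα, hcard]
  have hmem_om : ∀ x : ZMod (2*n+2), x ∈ ominus n α 2 ↔ x + 2 ∈ α := by
    intro x
    unfold ominus
    rw [Finset.mem_image]
    constructor
    · rintro ⟨y, hy, rfl⟩
      rwa [sub_add_cancel]
    · intro h
      exact ⟨x + 2, h, by ring⟩
  -- decomposition used for uniqueness
  have decomp : ∀ π' : Finset (ZMod (2*n+2)), π'.card = n →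
      (π'.filter fun x => parity n x = 0).card = i - 1 → (α ∩ π').card = n - 1 →
      ∃ a' b, a' ∈ α ∧ parity n a' = 0 ∧ b ∉ α ∧ parity n b = 1 ∧
        π' = insert b (α.erase a') := by
    intro π' hc' he' hint'
    have hsd1 : (α \ π').card = 1 := by
      have h := Finset.card_inter_add_card_sdiff α π'
      rw [hint', hcard] at h
      omega
    have hsd2 : (π' \ α).card = 1 := by
      have h := Finset.card_inter_add_card_sdiff π' α
      rw [Finset.inter_comm, hint', hc'] at h
      omega
    obtain ⟨a', ha'⟩ := Finset.card_eq_one.mp hsd1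
    obtain ⟨b, hb⟩ := Finset.card_eq_one.mp hsd2
    have ha'α : a' ∈ α := by
      have h : a' ∈ α \ π' := by rw [ha']; exact Finset.mem_singleton_self a'
      exact (Finset.mem_sdiff.mp h).1
    have hbπ : b ∈ π' ∧ b ∉ α := by
      have h : b ∈ π' \ α := by rw [hb]; exact Finset.mem_singleton_self b
      exact Finset.mem_sdiff.mp h
    have hia : α ∩ π' = α.erase a' := by
      rw [Finset.erase_eq, ← ha', Finset.sdiff_sdiff_self_left]
    have hπ'eq : π' = insert b (α.erase a') := by
      rw [← Finset.sdiff_union_inter π' α, hb, Finset.inter_comm, hia, ← Finset.insert_eq]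
    have hbp : parity n b = 1 := by
      rcases zmod2_cases (parity n b) with h | h
      · exfalso
        have h2 := he'
        rw [hπ'eq, Finset.filter_insert, if_pos h, Finset.filter_erase,
          Finset.card_insert_of_notMem
            (fun hc => hbπ.2 (Finset.mem_filter.mp (Finset.mem_of_mem_erase hc)).1)] at h2
        have hle := Finset.pred_card_le_card_erase
          (s := α.filter fun x => parity n x = 0) (a := a')
        rw [hev] at hle
        omega
      · exact h
    have ha'p : parity n a' = 0 := by
      rcases zmod2_cases (parity n a') with h | h
      · exact h
      · exfalso
        have h2 := he'
        rw [hπ'eq, Finset.filter_insert, if_neg (by rw [hbp]; decide), Finset.filter_erase,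
          Finset.erase_eq_of_notMem (fun hc => by
            have hx := (Finset.mem_filter.mp hc).2
            rw [h] at hx
            exact absurd hx (by decide)), hev] at h2
        omega
    exact ⟨a', b, ha'α, ha'p, hbπ.2, hbp, hπ'eq⟩
  by_cases hi : i = n
  · -- case i = n : all elements of α are even
    have hfe : α.filter (fun x => parity n x = 1) = ∅ :=
      Finset.card_eq_zero.mp (by rw [hod]; omega)
    have hallev : ∀ x ∈ α, parity n x = 0 := by
      intro x hx
      rcases zmod2_cases (parity n x) with h | h
      · exact h
      · exfalso
        have hmem : x ∈ α.filter (fun x => parity n x = 1) := Finset.mem_filter.mpr ⟨hx, h⟩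
        rw [hfe] at hmem
        exact absurd hmem (Finset.notMem_empty x)
    have hEv : (Finset.univ.filter fun x : ZMod (2*n+2) => parity n x = 0).card = n + 1 :=
      evens_card n
    have hsub : α ⊆ (Finset.univ.filter fun x : ZMod (2*n+2) => parity n x = 0).erase (a+2) := by
      intro x hx
      exact Finset.mem_erase.mpr ⟨fun h => habd (h ▸ hx),
        Finset.mem_filter.mpr ⟨Finset.mem_univ x, hallev x hx⟩⟩
    have hαeq : α = (Finset.univ.filter fun x : ZMod (2*n+2) => parity n x = 0).erase (a+2) := by
      apply Finset.eq_of_subset_of_card_le hsub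
      rw [Finset.card_erase_of_mem (Finset.mem_filter.mpr ⟨Finset.mem_univ _,
        by rw [parity_add_two, hapar]⟩), hEv, hcard]
      omega
    have hmemα : ∀ x : ZMod (2*n+2), x ∈ α ↔ (parity n x = 0 ∧ x ≠ a + 2) := by
      intro x
      rw [hαeq, Finset.mem_erase, Finset.mem_filter]
      constructor
      · rintro ⟨h1, _, h2⟩
        exact ⟨h2, h1⟩
      · rintro ⟨h1, h2⟩
        exact ⟨h2, Finset.mem_univ x, h1⟩
    have homset : (ominus n α 2) ∩ π = α.erase a := by
      ext x
      simp only [Finset.mem_inter, hmem_om, hπdef, Finset.mem_insert, Finset.mem_erase]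
      constructor
      · rintro ⟨hx2, rfl | ⟨hxa, hxα⟩⟩
        · exfalso
          have h := hallev _ hx2
          rw [parity_add_two, parity_add_one, hapar] at h
          exact absurd h (by decide)
        · exact ⟨hxa, hxα⟩
      · rintro ⟨hxa, hxα⟩
        refine ⟨?_, Or.inr ⟨hxa, hxα⟩⟩
        rw [hmemα]
        exact ⟨by rw [parity_add_two]; exact hallev x hxα,
          fun h => hxa (by linear_combination h)⟩
    refine ⟨π, ⟨⟨⟨hπcard, hπstab⟩, hπev, hπod⟩, hintercard,
      by rw [homset, Finset.card_erase_of_mem haα, hcard]⟩, ?_⟩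
    rintro π' ⟨⟨⟨hc', hs'⟩, he', ho'⟩, hint', hom'⟩
    obtain ⟨a', b, ha'α, ha'p, hbα, hbp, hπ'eq⟩ := decomp π' hc' he' hint'
    have hb2 : b + 2 ∉ α := fun h => by
      have hx := hallev _ h
      rw [parity_add_two, hbp] at hx
      exact absurd hx (by decide)
    have homset' : (ominus n α 2) ∩ π' = (α.erase a').erase a := by
      ext x
      simp only [Finset.mem_inter, hmem_om, hπ'eq, Finset.mem_insert, Finset.mem_erase]
      constructor
      · rintro ⟨hx2, rfl | ⟨hxa', hxα⟩⟩
        · exact absurd hx2 hb2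
        · exact ⟨fun h => habd (h ▸ hx2), hxa', hxα⟩
      · rintro ⟨hxa, hxa', hxα⟩
        refine ⟨?_, Or.inr ⟨hxa', hxα⟩⟩
        rw [hmemα]
        exact ⟨by rw [parity_add_two]; exact hallev x hxα,
          fun h => hxa (by linear_combination h)⟩
    have ha'a : a' = a := by
      by_contra hne
      rw [homset', Finset.card_erase_of_mem (Finset.mem_erase.mpr ⟨fun h => hne h.symm, haα⟩),
        Finset.card_erase_of_mem ha'α, hcard] at hom'
      omega
    subst ha'a
    have hbπ' : b ∈ π' := by rw [hπ'eq]; exact Finset.mem_insert_self b _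
    have hbm1 : b - 1 = a' ∨ b - 1 = a' + 2 := by
      have hnm : b - 1 ∉ π' := fun h => hs' (b-1) ⟨h, by rw [sub_add_cancel]; exact hbπ'⟩
      rw [hπ'eq, Finset.mem_insert, Finset.mem_erase] at hnm
      push_neg at hnm
      rcases eq_or_ne (b-1) a' with h | h
      · exact Or.inl h
      · have hnα : b - 1 ∉ α := hnm.2 h
        have hpar : parity n (b-1) = 0 := by
          rcases zmod2_cases (parity n (b-1)) with h0 | h1
          · exact h0
          · exfalso
            have h2 := hbp
            rw [← sub_add_cancel b 1, parity_add_one, h1] at h2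
            exact absurd h2 (by decide)
        rcases eq_or_ne (b-1) (a'+2) with h2 | h2
        · exact Or.inr h2
        · exact absurd ((hmemα (b-1)).mpr ⟨hpar, h2⟩) hnα
    have hbp1 : b + 1 = a' ∨ b + 1 = a' + 2 := by
      have hnm : b + 1 ∉ π' := fun h => hs' b ⟨hbπ', h⟩
      rw [hπ'eq, Finset.mem_insert, Finset.mem_erase] at hnm
      push_neg at hnm
      rcases eq_or_ne (b+1) a' with h | h
      · exact Or.inl h
      · have hnα : b + 1 ∉ α := hnm.2 h
        have hpar : parity n (b+1) = 0 := by
          rw [parity_add_one, hbp]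
          decide
        rcases eq_or_ne (b+1) (a'+2) with h2 | h2
        · exact Or.inr h2
        · exact absurd ((hmemα (b+1)).mpr ⟨hpar, h2⟩) hnα
    have hb : b = a' + 1 := by
      rcases hbm1 with h1 | h1 <;> rcases hbp1 with h2 | h2
      · exact absurd (show (2 : ZMod (2*n+2)) = 0 by linear_combination h2 - h1)
          (two_ne n (by omega))
      · linear_combination h1
      · exact absurd (show (4 : ZMod (2*n+2)) = 0 by linear_combination h2 - h1)
          (four_ne n hn)
      · exact absurd (show (2 : ZMod (2*n+2)) = 0 by linear_combination h2 - h1)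
          (two_ne n (by omega))
    rw [hπ'eq, hb]
  · -- case i < n : there is an odd boundary c
    have hodne : (α.filter fun x => parity n x = 1).Nonempty := by
      rw [← Finset.card_pos, hod]; omega
    obtain ⟨y0, hy0⟩ := hodne
    rw [Finset.mem_filter] at hy0
    obtain ⟨c, hcα, hcpar, hcbd⟩ := exists_boundary hcard hy0.1
    rw [hy0.2] at hcpar
    have hc1 : c + 1 ∉ α := fun h => hstab c ⟨hcα, h⟩
    have hac : a ≠ c := fun h => by
      rw [h, hcpar] at hapar
      exact absurd hapar (by decide)
    have hTcard := card_Tset hcard hstab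
    have haT : a + 2 ∈ Tset n α :=
      mem_Tset.mpr ⟨habd, by rw [show a+2-1 = a+1 by ring]; exact ha1⟩
    have hcT : c + 2 ∈ Tset n α :=
      mem_Tset.mpr ⟨hcbd, by rw [show c+2-1 = c+1 by ring]; exact hc1⟩
    have hacne : a + 2 ≠ c + 2 := fun h => hac (by linear_combination h)
    have hTeq : Tset n α = {a+2, c+2} := by
      symm
      apply Finset.eq_of_subset_of_card_le
      · intro x hx
        rw [Finset.mem_insert, Finset.mem_singleton] at hx
        rcases hx with rfl | rfl
        · exact haT
        · exact hcT
      · rw [hTcard, Finset.card_pair hacne]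
    have hmemT : ∀ t : ZMod (2*n+2), t ∉ α → t - 1 ∉ α → t = a + 2 ∨ t = c + 2 := by
      intro t h1 h2
      have h : t ∈ Tset n α := mem_Tset.mpr ⟨h1, h2⟩
      rw [hTeq, Finset.mem_insert, Finset.mem_singleton] at h
      exact h
    have ha3 : a + 3 ∈ α := by
      by_contra h3
      rcases hmemT (a+3) h3 (by rw [show a+3-1 = a+2 by ring]; exact habd) with h | h
      · exact one_ne n (by linear_combination h)
      · exact hstab a ⟨haα, by rw [show a + 1 = c by linear_combination h]; exact hcα⟩
    have hBle : (α.filter fun x => x + 2 ∉ α).card ≤ 2 := by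
      have himg : (α.filter fun x => x + 2 ∉ α).image (· + 2) ⊆ Tset n α := by
        intro x hx
        rw [Finset.mem_image] at hx
        obtain ⟨y, hy, rfl⟩ := hx
        rw [Finset.mem_filter] at hy
        exact mem_Tset.mpr ⟨hy.2, by
          rw [show y+2-1 = y+1 by ring]
          exact fun h => hstab y ⟨hy.1, h⟩⟩
      calc (α.filter fun x => x + 2 ∉ α).card
          = ((α.filter fun x => x + 2 ∉ α).image (· + 2)).card :=
            (Finset.card_image_of_injective _ (add_left_injective 2)).symm
        _ ≤ (Tset n α).card := Finset.card_le_card himg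
        _ = 2 := hTcard
    have hB : ∀ x ∈ α, x + 2 ∉ α → x = a ∨ x = c := by
      intro x hxα hx2
      by_contra hcon
      push_neg at hcon
      have hsub3 : ({x, a, c} : Finset (ZMod (2*n+2))) ⊆ α.filter fun x => x + 2 ∉ α := by
        intro y hy
        simp only [Finset.mem_insert, Finset.mem_singleton] at hy
        rcases hy with rfl | rfl | rfl
        · exact Finset.mem_filter.mpr ⟨hxα, hx2⟩
        · exact Finset.mem_filter.mpr ⟨haα, habd⟩
        · exact Finset.mem_filter.mpr ⟨hcα, hcbd⟩
      have h3 : ({x, a, c} : Finset (ZMod (2*n+2))).card = 3 := by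
        rw [Finset.card_insert_of_notMem (by simp [hcon.1, hcon.2]),
          Finset.card_insert_of_notMem (by simp [hac]), Finset.card_singleton]
      have hle := Finset.card_le_card hsub3
      omega
    have homset : (ominus n α 2) ∩ π = insert (a+1) ((α.erase a).erase c) := by
      ext x
      simp only [Finset.mem_inter, hmem_om, hπdef, Finset.mem_insert, Finset.mem_erase]
      constructor
      · rintro ⟨hx2, rfl | ⟨hxa, hxα⟩⟩
        · exact Or.inl rfl
        · exact Or.inr ⟨fun h => hcbd (h ▸ hx2), hxa, hxα⟩
      · rintro (rfl | ⟨hxc, hxa, hxα⟩)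
        · exact ⟨by rw [show a+1+2 = a+3 by ring]; exact ha3, Or.inl rfl⟩
        · refine ⟨?_, Or.inr ⟨hxa, hxα⟩⟩
          by_contra h2
          rcases hB x hxα h2 with h | h
          · exact hxa h
          · exact hxc h
    have homcard : ((ominus n α 2) ∩ π).card = n - 1 := by
      rw [homset, Finset.card_insert_of_notMem
          (fun h => ha1 (Finset.mem_of_mem_erase (Finset.mem_of_mem_erase h))),
        Finset.card_erase_of_mem (Finset.mem_erase.mpr ⟨Ne.symm hac, hcα⟩),
        Finset.card_erase_of_mem haα, hcard]
      omega
    refine ⟨π, ⟨⟨⟨hπcard, hπstab⟩, hπev, hπod⟩, hintercard, homcard⟩, ?_⟩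
    rintro π' ⟨⟨⟨hc', hs'⟩, he', ho'⟩, hint', hom'⟩
    obtain ⟨a', b, ha'α, ha'p, hbα, hbp, hπ'eq⟩ := decomp π' hc' he' hint'
    have ha'c : a' ≠ c := fun h => by
      rw [h, hcpar] at ha'p
      exact absurd ha'p (by decide)
    have ha'a : a' = a := by
      by_contra hne
      have h3n : 3 ≤ n := by
        have hsub3 : ({a', a, c} : Finset (ZMod (2*n+2))) ⊆ α := by
          intro y hy
          simp only [Finset.mem_insert, Finset.mem_singleton] at hy
          rcases hy with rfl | rfl | rfl
          · exact ha'α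
          · exact haα
          · exact hcα
        have h3 : ({a', a, c} : Finset (ZMod (2*n+2))).card = 3 := by
          rw [Finset.card_insert_of_notMem (by simp [hne, ha'c]),
            Finset.card_insert_of_notMem (by simp [hac]), Finset.card_singleton]
        have hle := Finset.card_le_card hsub3
        omega
      have hsubover : (ominus n α 2) ∩ π' ⊆ insert b (((α.erase a).erase c).erase a') := by
        intro x hx
        rw [Finset.mem_inter, hmem_om] at hx
        obtain ⟨hx2, hxπ⟩ := hx
        rw [hπ'eq, Finset.mem_insert, Finset.mem_erase] at hxπ
        rcases hxπ with rfl | ⟨hxa', hxα⟩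
        · exact Finset.mem_insert_self _ _
        · exact Finset.mem_insert_of_mem (Finset.mem_erase.mpr ⟨hxa',
            Finset.mem_erase.mpr ⟨fun h => hcbd (h ▸ hx2),
              Finset.mem_erase.mpr ⟨fun h => habd (h ▸ hx2), hxα⟩⟩⟩)
      have hcard3 : (((α.erase a).erase c).erase a').card = n - 3 := by
        rw [Finset.card_erase_of_mem (Finset.mem_erase.mpr ⟨ha'c,
            Finset.mem_erase.mpr ⟨hne, ha'α⟩⟩),
          Finset.card_erase_of_mem (Finset.mem_erase.mpr ⟨Ne.symm hac, hcα⟩),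
          Finset.card_erase_of_mem haα, hcard]
        omega
      have hle2 : ((ominus n α 2) ∩ π').card ≤ n - 2 := by
        calc ((ominus n α 2) ∩ π').card
            ≤ (insert b (((α.erase a).erase c).erase a')).card := Finset.card_le_card hsubover
          _ ≤ (((α.erase a).erase c).erase a').card + 1 := Finset.card_insert_le _ _
          _ = n - 2 := by rw [hcard3]; omega
      omega
    subst ha'a
    have hb : b = a' + 1 := by
      by_contra hbne
      have hb2 : b + 2 ∈ α := by
        by_contra hb2
        have hsubover : (ominus n α 2) ∩ π' ⊆ (α.erase a').erase c := by
          intro x hx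
          rw [Finset.mem_inter, hmem_om] at hx
          obtain ⟨hx2, hxπ⟩ := hx
          rw [hπ'eq, Finset.mem_insert, Finset.mem_erase] at hxπ
          rcases hxπ with rfl | ⟨hxa, hxα⟩
          · exact absurd hx2 hb2
          · exact Finset.mem_erase.mpr ⟨fun h => hcbd (h ▸ hx2),
              Finset.mem_erase.mpr ⟨hxa, hxα⟩⟩
        have hle := Finset.card_le_card hsubover
        rw [hom', Finset.card_erase_of_mem (Finset.mem_erase.mpr ⟨Ne.symm hac, hcα⟩),
          Finset.card_erase_of_mem haα, hcard] at hle
        omega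
      have hbm : b - 1 ∉ α := by
        intro hmem
        have hbm_ne_a : b - 1 ≠ a' := fun h => hbne (by linear_combination h)
        have hmem' : b - 1 ∈ π' := by
          rw [hπ'eq]
          exact Finset.mem_insert_of_mem (Finset.mem_erase.mpr ⟨hbm_ne_a, hmem⟩)
        exact hs' (b-1) ⟨hmem', by
          rw [sub_add_cancel, hπ'eq]
          exact Finset.mem_insert_self b _⟩
      rcases hmemT b hbα hbm with h | h
      · rw [h, parity_add_two, hapar] at hbp
        exact absurd hbp (by decide)
      · have hc4 : c + 4 ∈ α := by
          rw [show c + 4 = (c+2) + 2 by ring, ← h]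
          exact hb2
        have hc3 : c + 3 ∉ α := fun hmem => hstab (c+3) ⟨hmem, by
          rw [show c+3+1 = c+4 by ring]; exact hc4⟩
        rcases hmemT (c+3) hc3 (by rw [show c+3-1 = c+2 by ring]; exact hcbd) with h2 | h2
        · have hca : c + 1 = a' := by linear_combination h2
          exact hstab c ⟨hcα, by rw [hca]; exact ha'α⟩
        · exact one_ne n (by linear_combination h2)
    rw [hπ'eq, hb]
end

section
/- Let n ≥ 1 and let α and β be distinct loose stable n-sets in ZMod (2n+2). Then α and β have at most two common neighbors in SG_{n,2}; that is, there are at most two stable n-sets disjoint from both α and β. -/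
section Aux

lemma castInj {n a b : ℕ} (ha : a < 2*n+2) (hb : b < 2*n+2)
    (h : (a : ZMod (2*n+2)) = (b : ZMod (2*n+2))) : a = b := by
  have h2 := (ZMod.natCast_eq_natCast_iff a b (2*n+2)).mp h
  rwa [Nat.ModEq, Nat.mod_eq_of_lt ha, Nat.mod_eq_of_lt hb] at h2

lemma compl_card_stable {n : ℕ} {α : Finset (ZMod (2*n+2))} (hα : IsStable n α) :
    αᶜ.card = n + 2 := by
  rw [Finset.card_compl, hα.1, ZMod.card]
  omega

lemma T_card {n : ℕ} {α : Finset (ZMod (2*n+2))} (hα : IsStable n α) :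
    (αᶜ.filter fun z => z - 1 ∉ α).card = 2 := by
  have hsplit := Finset.card_filter_add_card_filter_not
    (s := αᶜ) (p := fun z => z - 1 ∈ α)
  have hF : (αᶜ.filter fun z => z - 1 ∈ α).card = n := by
    have hb : (αᶜ.filter fun z => z - 1 ∈ α).card = α.card := by
      apply Finset.card_bij (fun z _ => z - 1)
      · intro a ha
        exact (Finset.mem_filter.mp ha).2
      · intro a ha b hb hab
        have : a - 1 + 1 = b - 1 + 1 := by rw [hab]
        simpa using this
      · intro b hb
        refine ⟨b + 1, Finset.mem_filter.mpr ⟨Finset.mem_compl.mpr ?_, by simpa using hb⟩, by ring⟩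
        exact fun hc => hα.2 b ⟨hb, hc⟩
    rw [hb, hα.1]
  have hC := compl_card_stable hα
  have : (αᶜ.filter fun z => ¬ (z - 1 ∈ α)).card = 2 := by omega
  simpa using this

lemma tight_of_three {n : ℕ} (hn : 1 ≤ n) {α : Finset (ZMod (2*n+2))}
    (hα : IsStable n α) {t : ZMod (2*n+2)}
    (h0 : t ∉ α) (h1 : t + 1 ∉ α) (h2 : t + 2 ∉ α) : IsTight n α := by
  have hT2 : (αᶜ.filter fun z => z - 1 ∉ α).card = 2 := T_card hα
  have hm1 : t + 1 ∈ (αᶜ.filter fun z => z - 1 ∉ α) :=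
    Finset.mem_filter.mpr ⟨Finset.mem_compl.mpr h1, by simpa using h0⟩
  have hm2 : t + 2 ∈ (αᶜ.filter fun z => z - 1 ∉ α) :=
    Finset.mem_filter.mpr ⟨Finset.mem_compl.mpr h2, by
      have : t + 2 - 1 = t + 1 := by ring
      rw [this]; exact h1⟩
  have hne12 : t + 1 ≠ t + 2 := by
    intro h
    have h' : ((1:ℕ) : ZMod (2*n+2)) = ((2:ℕ) : ZMod (2*n+2)) := by
      have := add_left_cancel h
      exact_mod_cast this
    have := castInj (by omega) (by omega) h'
    omega
  have hTeq : (αᶜ.filter fun z => z - 1 ∉ α) = {t+1, t+2} := by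
    refine (Finset.eq_of_subset_of_card_le ?_ ?_).symm
    · intro x hx
      rcases Finset.mem_insert.mp hx with rfl | hx
      · exact hm1
      · rw [Finset.mem_singleton.mp hx]; exact hm2
    · rw [hT2, Finset.card_pair hne12]
  have key : ∀ z : ZMod (2*n+2), z ∉ α → z - 1 ∉ α → z = t + 1 ∨ z = t + 2 := by
    intro z hz hz1
    have : z ∈ (αᶜ.filter fun z => z - 1 ∉ α) :=
      Finset.mem_filter.mpr ⟨Finset.mem_compl.mpr hz, hz1⟩
    rw [hTeq] at this
    simpa using this
  have chain : ∀ k, k < n → t + ((2*k+3 : ℕ) : ZMod (2*n+2)) ∈ α := by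
    intro k
    induction k with
    | zero =>
      intro _
      by_contra hmem
      have e1 : t + ((2*0+3 : ℕ) : ZMod (2*n+2)) - 1 = t + 2 := by push_cast; ring
      rcases key _ hmem (by rw [e1]; exact h2) with h | h
      · have h' : ((2*0+3:ℕ) : ZMod (2*n+2)) = ((1:ℕ) : ZMod (2*n+2)) := by
          have := add_left_cancel h; exact_mod_cast this
        have := castInj (by omega) (by omega) h'; omega
      · have h' : ((2*0+3:ℕ) : ZMod (2*n+2)) = ((2:ℕ) : ZMod (2*n+2)) := by
          have := add_left_cancel h; exact_mod_cast this
        have := castInj (by omega) (by omega) h'; omega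
    | succ k ih =>
      intro hk
      have ha := ih (by omega)
      by_contra hmem
      have hnot1 : t + ((2*k+3:ℕ) : ZMod (2*n+2)) + 1 ∉ α := fun hc => hα.2 _ ⟨ha, hc⟩
      have e1 : t + ((2*(k+1)+3 : ℕ) : ZMod (2*n+2)) - 1
          = t + ((2*k+3:ℕ) : ZMod (2*n+2)) + 1 := by push_cast; ring
      rcases key _ hmem (by rw [e1]; exact hnot1) with h | h
      · have h' : ((2*(k+1)+3:ℕ) : ZMod (2*n+2)) = ((1:ℕ) : ZMod (2*n+2)) := by
          have := add_left_cancel h; exact_mod_cast this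
        have := castInj (by omega) (by omega) h'; omega
      · have h' : ((2*(k+1)+3:ℕ) : ZMod (2*n+2)) = ((2:ℕ) : ZMod (2*n+2)) := by
          have := add_left_cancel h; exact_mod_cast this
        have := castInj (by omega) (by omega) h'; omega
  refine ⟨t + 3, ?_⟩
  have hsub : (Finset.range n).image
      (fun k : ℕ => (t+3) + 2 * (k : ZMod (2*n+2))) ⊆ α := by
    intro x hx
    obtain ⟨k, hk, rfl⟩ := Finset.mem_image.mp hx
    have hk' := Finset.mem_range.mp hk
    have : (t+3) + 2 * (k : ZMod (2*n+2)) = t + ((2*k+3 : ℕ) : ZMod (2*n+2)) := by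
      push_cast; ring
    rw [this]
    exact chain k hk'
  have hcard : ((Finset.range n).image
      (fun k : ℕ => (t+3) + 2 * (k : ZMod (2*n+2)))).card = n := by
    rw [Finset.card_image_of_injOn, Finset.card_range]
    intro a ha b hb hab
    have ha' := Finset.mem_range.mp ha
    have hb' := Finset.mem_range.mp hb
    have h' : ((2*a:ℕ) : ZMod (2*n+2)) = ((2*b:ℕ) : ZMod (2*n+2)) := by
      have := add_left_cancel hab
      push_cast
      exact_mod_cast this
    have := castInj (by omega) (by omega) h'
    omega
  exact (Finset.eq_of_subset_of_card_le hsub (by rw [hcard, hα.1])).symm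

lemma pairs_ne {n : ℕ} {t1 t2 : ZMod (2*n+2)} (h : t1 ≠ t2) (h1 : t1 ≠ t2 + 1)
    (h2 : t2 ≠ t1 + 1) {u v : ZMod (2*n+2)}
    (hu : u = t1 - 1 ∨ u = t1) (hv : v = t2 - 1 ∨ v = t2) : u ≠ v := by
  rcases hu with rfl | rfl <;> rcases hv with rfl | rfl <;> intro hE
  · exact h (by linear_combination hE)
  · exact h1 (by linear_combination hE)
  · exact h2 (by linear_combination -hE)
  · exact h hE

lemma missing_pair {n : ℕ} {α γ : Finset (ZMod (2*n+2))} (hα : IsStable n α)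
    (hγ : IsStable n γ) (hd : Disjoint α γ) {t1 t2 : ZMod (2*n+2)}
    (ht1 : t1 ∉ α) (ht1' : t1 - 1 ∉ α) (ht2 : t2 ∉ α) (ht2' : t2 - 1 ∉ α)
    (h12 : t1 ≠ t2) (h12' : t1 ≠ t2 + 1) (h21' : t2 ≠ t1 + 1) :
    ∃ u v, (u = t1 - 1 ∨ u = t1) ∧ (v = t2 - 1 ∨ v = t2) ∧ αᶜ \ γ = {u, v} := by
  have hsub : γ ⊆ αᶜ := by
    intro x hx
    exact Finset.mem_compl.mpr fun hxa => (Finset.disjoint_left.mp hd hxa) hx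
  have hDcard : (αᶜ \ γ).card = 2 := by
    rw [Finset.card_sdiff_of_subset hsub, compl_card_stable hα, hγ.1]; omega
  have pick : ∀ s : ZMod (2*n+2), s ∉ α → s - 1 ∉ α →
      ∃ w, (w = s - 1 ∨ w = s) ∧ w ∈ αᶜ \ γ := by
    intro s hs hs'
    have hnb : ¬(s - 1 ∈ γ ∧ s ∈ γ) := by
      have := hγ.2 (s - 1)
      have e : s - 1 + 1 = s := by ring
      rwa [e] at this
    by_cases hc : s - 1 ∈ γ
    · refine ⟨s, Or.inr rfl, Finset.mem_sdiff.mpr ⟨Finset.mem_compl.mpr hs, ?_⟩⟩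
      exact fun hc2 => hnb ⟨hc, hc2⟩
    · exact ⟨s - 1, Or.inl rfl, Finset.mem_sdiff.mpr ⟨Finset.mem_compl.mpr hs', hc⟩⟩
  obtain ⟨u, hu, huD⟩ := pick t1 ht1 ht1'
  obtain ⟨v, hv, hvD⟩ := pick t2 ht2 ht2'
  have huv : u ≠ v := pairs_ne h12 h12' h21' hu hv
  refine ⟨u, v, hu, hv, (Finset.eq_of_subset_of_card_le ?_ ?_).symm⟩
  · intro x hx
    rcases Finset.mem_insert.mp hx with rfl | hx
    · exact huD
    · rw [Finset.mem_singleton.mp hx]; exact hvD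
  · rw [hDcard, Finset.card_pair huv]

lemma pigeon2 {X : Type*} {a b x y z : X} (hx : x = a ∨ x = b) (hy : y = a ∨ y = b)
    (hz : z = a ∨ z = b) : x = y ∨ x = z ∨ y = z := by
  rcases hx with rfl | rfl <;> rcases hy with h | h <;> rcases hz with h' | h' <;>
    simp_all

end Aux

/-- Two distinct loose stable n-sets have at most two common neighbors in
`SG_{n,2}`. -/
theorem loose_loose_common_neighbors (n : ℕ) (hn : 1 ≤ n)
    (α β : Finset (ZMod (2 * n + 2)))
    (hα : IsStable n α) (hαl : ¬ IsTight n α)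
    (hβ : IsStable n β) (hβl : ¬ IsTight n β) (hne : α ≠ β) :
    {γ : Finset (ZMod (2 * n + 2)) |
      IsStable n γ ∧ Disjoint α γ ∧ Disjoint β γ}.ncard ≤ 2 := by
  by_contra hcon
  push_neg at hcon
  set N := {γ : Finset (ZMod (2 * n + 2)) |
      IsStable n γ ∧ Disjoint α γ ∧ Disjoint β γ} with hN
  have hfin : N.Finite := Set.toFinite _
  rw [Set.ncard_eq_toFinset_card N hfin] at hcon
  obtain ⟨γ1, γ2, γ3, hm1, hm2, hm3, hg12, hg13, hg23⟩ :=
    Finset.two_lt_card_iff.mp hcon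
  rw [Set.Finite.mem_toFinset] at hm1 hm2 hm3
  obtain ⟨hs1, hd1, hb1⟩ := hm1
  obtain ⟨hs2, hd2, hb2⟩ := hm2
  obtain ⟨hs3, hd3, hb3⟩ := hm3
  -- the two "doubled" positions of the complement
  obtain ⟨t1, t2, h12, hTeq⟩ := Finset.card_eq_two.mp (T_card hα)
  have ht1mem : t1 ∈ (αᶜ.filter fun z => z - 1 ∉ α) := by
    rw [hTeq]; exact Finset.mem_insert_self _ _
  have ht2mem : t2 ∈ (αᶜ.filter fun z => z - 1 ∉ α) := by
    rw [hTeq]; exact Finset.mem_insert_of_mem (Finset.mem_singleton_self _)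
  have ht1 : t1 ∉ α := Finset.mem_compl.mp (Finset.mem_filter.mp ht1mem).1
  have ht1' : t1 - 1 ∉ α := (Finset.mem_filter.mp ht1mem).2
  have ht2 : t2 ∉ α := Finset.mem_compl.mp (Finset.mem_filter.mp ht2mem).1
  have ht2' : t2 - 1 ∉ α := (Finset.mem_filter.mp ht2mem).2
  have h12' : t1 ≠ t2 + 1 := by
    intro h
    apply hαl
    apply tight_of_three hn hα (t := t2 - 1) ht2'
    · have e : t2 - 1 + 1 = t2 := by ring
      rw [e]; exact ht2
    · have e : t2 - 1 + 2 = t1 := by rw [h]; ring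
      rw [e]; exact ht1
  have h21' : t2 ≠ t1 + 1 := by
    intro h
    apply hαl
    apply tight_of_three hn hα (t := t1 - 1) ht1'
    · have e : t1 - 1 + 1 = t1 := by ring
      rw [e]; exact ht1
    · have e : t1 - 1 + 2 = t2 := by rw [h]; ring
      rw [e]; exact ht2
  obtain ⟨u1, v1, hu1, hv1, hD1⟩ :=
    missing_pair hα hs1 hd1 ht1 ht1' ht2 ht2' h12 h12' h21'
  obtain ⟨u2, v2, hu2, hv2, hD2⟩ :=
    missing_pair hα hs2 hd2 ht1 ht1' ht2 ht2' h12 h12' h21'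
  obtain ⟨u3, v3, hu3, hv3, hD3⟩ :=
    missing_pair hα hs3 hd3 ht1 ht1' ht2 ht2' h12 h12' h21'
  have hsub : ∀ {γ : Finset (ZMod (2*n+2))}, Disjoint α γ → γ ⊆ αᶜ := by
    intro γ hd x hx
    exact Finset.mem_compl.mpr fun hxa => (Finset.disjoint_left.mp hd hxa) hx
  have hrec1 : αᶜ \ ({u1, v1} : Finset _) = γ1 := by
    rw [← hD1]; exact Finset.sdiff_sdiff_eq_self (hsub hd1)
  have hrec2 : αᶜ \ ({u2, v2} : Finset _) = γ2 := by
    rw [← hD2]; exact Finset.sdiff_sdiff_eq_self (hsub hd2)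
  have hrec3 : αᶜ \ ({u3, v3} : Finset _) = γ3 := by
    rw [← hD3]; exact Finset.sdiff_sdiff_eq_self (hsub hd3)
  have hDne12 : ({u1, v1} : Finset _) ≠ {u2, v2} := by
    intro h; exact hg12 (by rw [← hrec1, ← hrec2, h])
  have hDne13 : ({u1, v1} : Finset _) ≠ {u3, v3} := by
    intro h; exact hg13 (by rw [← hrec1, ← hrec3, h])
  have hDne23 : ({u2, v2} : Finset _) ≠ {u3, v3} := by
    intro h; exact hg23 (by rw [← hrec2, ← hrec3, h])
  -- every element of the complement of α lies in some γᵢ, hence β ⊆ α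
  have hβα : β ⊆ α := by
    intro b hb
    by_contra hbα
    have hbc : b ∈ αᶜ := Finset.mem_compl.mpr hbα
    have hbD : ∀ {γ : Finset (ZMod (2*n+2))} {u v : ZMod (2*n+2)},
        Disjoint β γ → αᶜ \ γ = {u, v} → b = u ∨ b = v := by
      intro γ u v hdB hD
      have hbγ : b ∉ γ := fun hc => (Finset.disjoint_left.mp hdB hb) hc
      have : b ∈ αᶜ \ γ := Finset.mem_sdiff.mpr ⟨hbc, hbγ⟩
      rw [hD] at this
      simpa using this
    have hb1' := hbD hb1 hD1
    have hb2' := hbD hb2 hD2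
    have hb3' := hbD hb3 hD3
    have huvne : ∀ {u v : ZMod (2*n+2)}, (u = t1 - 1 ∨ u = t1) →
        (v = t2 - 1 ∨ v = t2) → u ≠ v := fun hu hv => pairs_ne h12 h12' h21' hu hv
    -- case analysis
    rcases hb1' with hA1 | hA1 <;> rcases hb2' with hA2 | hA2 <;>
      rcases hb3' with hA3 | hA3
    · -- b = u1 = u2 = u3 : the v's must be pairwise distinct, pigeonhole
      rcases pigeon2 hv1 hv2 hv3 with h | h | h
      · exact hDne12 (by rw [hA1.symm.trans hA2, h])
      · exact hDne13 (by rw [hA1.symm.trans hA3, h])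
      · exact hDne23 (by rw [hA2.symm.trans hA3, h])
    · exact huvne hu1 hv3 (hA1.symm.trans hA3)
    · exact huvne hu1 hv2 (hA1.symm.trans hA2)
    · exact huvne hu1 hv2 (hA1.symm.trans hA2)
    · exact huvne hu2 hv1 (hA2.symm.trans hA1)
    · exact huvne hu2 hv1 (hA2.symm.trans hA1)
    · exact huvne hu3 hv1 (hA3.symm.trans hA1)
    · -- b = v1 = v2 = v3 : the u's must be pairwise distinct, pigeonhole
      rcases pigeon2 hu1 hu2 hu3 with h | h | h
      · exact hDne12 (by rw [hA1.symm.trans hA2, h])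
      · exact hDne13 (by rw [hA1.symm.trans hA3, h])
      · exact hDne23 (by rw [hA2.symm.trans hA3, h])
  have : β = α := Finset.eq_of_subset_of_card_le hβα (by rw [hα.1, hβ.1])
  exact hne this.symm
end

section
/- Let n ≥ 2, let α be a tight stable n-set and β a loose stable n-set in ZMod (2n+2) with |α ∩ β| ≤ n − 2. Then α and β have at most one common neighbor in SG_{n,2}; that is, there is at most one stable n-set disjoint from both α and β. -/
lemma natCast_inj' (n a b : ℕ) (ha : a < 2*n+2) (hb : b < 2*n+2)
    (h : (a : ZMod (2*n+2)) = b) : a = b := by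
  rw [← ZMod.val_cast_of_lt ha, ← ZMod.val_cast_of_lt hb, h]

lemma step_inj (n : ℕ) (i : ZMod (2*n+2)) {j k : ℕ} (hj : j ≤ n) (hk : k ≤ n)
    (h : i + 2*(j : ZMod (2*n+2)) = i + 2*(k : ZMod (2*n+2))) : j = k := by
  have h2 : ((2*j : ℕ) : ZMod (2*n+2)) = ((2*k : ℕ) : ZMod (2*n+2)) := by
    push_cast
    exact add_left_cancel h
  have := natCast_inj' n (2*j) (2*k) (by omega) (by omega) h2
  omega

lemma parity_ne (n : ℕ) (i : ZMod (2*n+2)) (j k : ℕ) :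
    i + 2*(j : ZMod (2*n+2)) ≠ i + 1 + 2*(k : ZMod (2*n+2)) := by
  intro h
  have h' : ((2*j : ℕ) : ZMod (2*n+2)) = ((2*k+1 : ℕ) : ZMod (2*n+2)) := by
    push_cast
    linear_combination h
  rw [ZMod.natCast_eq_natCast_iff] at h'
  have := h'.of_dvd (show (2:ℕ) ∣ 2*n+2 from ⟨n+1, by ring⟩)
  simp [Nat.ModEq] at this

lemma cover (n : ℕ) (i x : ZMod (2*n+2)) :
    (∃ j ≤ n, x = i + 2*(j : ZMod (2*n+2))) ∨
    (∃ j ≤ n, x = i + 1 + 2*(j : ZMod (2*n+2))) := by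
  have hx : x = i + ((x - i).val : ZMod (2*n+2)) := by
    simp [ZMod.natCast_val, ZMod.cast_id]
  have hk : (x - i).val < 2*n+2 := ZMod.val_lt _
  rcases Nat.even_or_odd (x - i).val with ⟨j, hj⟩ | ⟨j, hj⟩
  · left; exact ⟨j, by omega, by rw [hx, hj]; push_cast; ring⟩
  · right; exact ⟨j, by omega, by rw [hx, hj]; push_cast; ring⟩


/-- A tight stable n-set `α` and a loose stable n-set `β` with `|α ∩ β| ≤ n - 2`
have at most one common neighbor in `SG_{n,2}`. -/
theorem tight_loose_small_inter_common_neighbors (n : ℕ) (hn : 2 ≤ n)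
    (α β : Finset (ZMod (2 * n + 2)))
    (hα : IsStable n α) (hαt : IsTight n α)
    (hβ : IsStable n β) (hβl : ¬ IsTight n β)
    (hcap : (α ∩ β).card ≤ n - 2) :
    {γ : Finset (ZMod (2 * n + 2)) |
      IsStable n γ ∧ Disjoint α γ ∧ Disjoint β γ}.ncard ≤ 1 := by
  classical
  rw [Set.ncard_le_one_iff]
  intro γ1 γ2 h1 h2
  simp only [Set.mem_setOf_eq] at h1 h2
  obtain ⟨hst1, hd1α, hd1β⟩ := h1
  obtain ⟨hst2, hd2α, hd2β⟩ := h2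
  obtain ⟨i, hαeq⟩ := hαt
  set e : ℕ → ZMod (2*n+2) := fun j => i + 2*(j : ZMod (2*n+2)) with he
  set o : ℕ → ZMod (2*n+2) := fun j => i + 1 + 2*(j : ZMod (2*n+2)) with ho
  set O : Finset (ZMod (2*n+2)) := (Finset.range (n+1)).image o with hO
  set E : Finset (ZMod (2*n+2)) := (Finset.range (n+1)).image e with hE
  have hmemO : ∀ x, x ∈ O ↔ ∃ j ≤ n, x = o j := by
    intro x
    simp only [hO, Finset.mem_image, Finset.mem_range]
    constructor
    · rintro ⟨j, hj, rfl⟩; exact ⟨j, by omega, rfl⟩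
    · rintro ⟨j, hj, rfl⟩; exact ⟨j, by omega, rfl⟩
  have hmemE : ∀ x, x ∈ E ↔ ∃ j ≤ n, x = e j := by
    intro x
    simp only [hE, Finset.mem_image, Finset.mem_range]
    constructor
    · rintro ⟨j, hj, rfl⟩; exact ⟨j, by omega, rfl⟩
    · rintro ⟨j, hj, rfl⟩; exact ⟨j, by omega, rfl⟩
  have hmemA : ∀ x, x ∈ α ↔ ∃ j < n, x = e j := by
    intro x
    rw [hαeq]
    simp only [Finset.mem_image, Finset.mem_range]
    constructor
    · rintro ⟨j, hj, rfl⟩; exact ⟨j, hj, rfl⟩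
    · rintro ⟨j, hj, rfl⟩; exact ⟨j, hj, rfl⟩
  have hOcard : O.card = n + 1 := by
    rw [hO, Finset.card_image_of_injOn, Finset.card_range]
    intro a ha b hb hab
    simp only [Finset.mem_coe, Finset.mem_range] at ha hb
    exact step_inj n (i+1) (by omega) (by omega) hab
  have hEcard : E.card = n + 1 := by
    rw [hE, Finset.card_image_of_injOn, Finset.card_range]
    intro a ha b hb hab
    simp only [Finset.mem_coe, Finset.mem_range] at ha hb
    exact step_inj n i (by omega) (by omega) hab
  -- every element of a common neighbor is e n or lies in O
  have hsub1 : ∀ γ : Finset (ZMod (2*n+2)), Disjoint α γ → ∀ x ∈ γ, x = e n ∨ x ∈ O := by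
    intro γ hd x hx
    rcases cover n i x with ⟨j, hj, rfl⟩ | ⟨j, hj, rfl⟩
    · left
      have hjn : j = n := by
        by_contra hne
        exact Finset.disjoint_left.mp hd (hmemA _ |>.mpr ⟨j, by omega, rfl⟩) hx
      rw [hjn]
    · right
      exact hmemO _ |>.mpr ⟨j, hj, rfl⟩
  -- extraction lemma
  have extract : ∀ (T γ : Finset (ZMod (2*n+2))), γ.card = n → T.card = n + 1 → γ ⊆ T →
      ∃ u ∈ T, γ = T.erase u := by
    intro T γ hc hT hsub
    have h1 : (T \ γ).card = 1 := by
      rw [Finset.card_sdiff_of_subset hsub]; omega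
    obtain ⟨u, hu⟩ := Finset.card_eq_one.mp h1
    have huT : u ∈ T := by
      have : u ∈ T \ γ := by rw [hu]; exact Finset.mem_singleton_self u
      exact (Finset.mem_sdiff.mp this).1
    refine ⟨u, huT, ?_⟩
    have := Finset.sdiff_sdiff_eq_self hsub
    rw [hu] at this
    rw [← this, Finset.erase_eq]
  -- case: e n ∉ γ
  have hcase0 : ∀ γ : Finset (ZMod (2*n+2)), IsStable n γ → Disjoint α γ → e n ∉ γ →
      ∃ u ∈ O, γ = O.erase u := by
    intro γ hst hd hen
    apply extract O γ hst.1 hOcard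
    intro x hx
    rcases hsub1 γ hd x hx with rfl | hxO
    · exact absurd hx hen
    · exact hxO
  -- case: e n ∈ γ
  have hcase1 : ∀ γ : Finset (ZMod (2*n+2)), IsStable n γ → Disjoint α γ → e n ∈ γ →
      γ = insert (e n) ((O.erase (o n)).erase (o (n-1))) := by
    intro γ hst hd hen
    have honeq : e n + 1 = o n := by simp only [he, ho]; ring
    have honeq' : o (n-1) + 1 = e n := by
      have hc : ((n - 1 : ℕ) : ZMod (2*n+2)) = (n : ZMod (2*n+2)) - 1 := by
        rw [Nat.cast_sub (by omega : 1 ≤ n)]; simp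
      simp only [he, ho, hc]; ring
    have hon : o n ∉ γ := by
      intro hc
      exact hst.2 (e n) ⟨hen, by rw [honeq]; exact hc⟩
    have hon' : o (n-1) ∉ γ := by
      intro hc
      exact hst.2 (o (n-1)) ⟨hc, by rw [honeq']; exact hen⟩
    have honO : o n ∈ O := hmemO _ |>.mpr ⟨n, le_refl n, rfl⟩
    have hon'O : o (n-1) ∈ (O.erase (o n)) := by
      rw [Finset.mem_erase]
      refine ⟨?_, hmemO _ |>.mpr ⟨n-1, by omega, rfl⟩⟩
      intro hc
      have := step_inj n (i+1) (show n-1 ≤ n by omega) (le_refl n) hc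
      omega
    have hDcard : ((O.erase (o n)).erase (o (n-1))).card = n - 1 := by
      rw [Finset.card_erase_of_mem hon'O, Finset.card_erase_of_mem honO, hOcard]
      omega
    have hsubD : γ.erase (e n) ⊆ (O.erase (o n)).erase (o (n-1)) := by
      intro x hx
      obtain ⟨hxne, hxγ⟩ := Finset.mem_erase.mp hx
      rcases hsub1 γ hd x hxγ with rfl | hxO
      · exact absurd rfl hxne
      · rw [Finset.mem_erase, Finset.mem_erase]
        refine ⟨?_, ?_, hxO⟩
        · rintro rfl; exact hon' hxγ
        · rintro rfl; exact hon hxγ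
    have hcγ : (γ.erase (e n)).card = n - 1 := by
      rw [Finset.card_erase_of_mem hen, hst.1]
    have heq : γ.erase (e n) = (O.erase (o n)).erase (o (n-1)) :=
      Finset.eq_of_subset_of_card_le hsubD (by omega)
    rw [← heq, Finset.insert_erase hen]
  -- mixed case is impossible
  have hmixed : ∀ γa γb : Finset (ZMod (2*n+2)), IsStable n γa → Disjoint α γa → Disjoint β γa →
      IsStable n γb → Disjoint α γb → Disjoint β γb → e n ∈ γa → e n ∉ γb → False := by
    intro γa γb hsta hdaα hdaβ hstb hdbα hdbβ hena henb
    obtain ⟨u, huO, hγb⟩ := hcase0 γb hstb hdbα henb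
    have hsubα : β.erase u ⊆ α := by
      intro x hx
      obtain ⟨hxne, hxβ⟩ := Finset.mem_erase.mp hx
      rcases cover n i x with ⟨l, hl, hxe⟩ | ⟨l, hl, hxe⟩
      · have hln : l ≠ n := by
          intro hlEq
          subst hlEq
          have hxen : x = e l := hxe
          exact Finset.disjoint_left.mp hdaβ hxβ (by rw [hxen]; exact hena)
        exact hmemA _ |>.mpr ⟨l, by omega, hxe⟩
      · exfalso
        have hxO : x ∈ O := hmemO _ |>.mpr ⟨l, hl, hxe⟩
        have hxnb : x ∉ γb := Finset.disjoint_left.mp hdbβ hxβ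
        rw [hγb, Finset.mem_erase] at hxnb
        push_neg at hxnb
        exact (hxnb hxne) hxO
    have hsubint : β.erase u ⊆ α ∩ β := fun x hx =>
      Finset.mem_inter.mpr ⟨hsubα hx, (Finset.mem_erase.mp hx).2⟩
    have hge : n - 1 ≤ (α ∩ β).card := by
      calc n - 1 = β.card - 1 := by rw [hβ.1]
      _ ≤ (β.erase u).card := Finset.pred_card_le_card_erase
      _ ≤ (α ∩ β).card := Finset.card_le_card hsubint
    omega
  -- now the case analysis
  by_cases hm1 : e n ∈ γ1 <;> by_cases hm2 : e n ∈ γ2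
  · rw [hcase1 γ1 hst1 hd1α hm1, hcase1 γ2 hst2 hd2α hm2]
  · exact absurd (hmixed γ1 γ2 hst1 hd1α hd1β hst2 hd2α hd2β hm1 hm2) (by simp)
  · exact absurd (hmixed γ2 γ1 hst2 hd2α hd2β hst1 hd1α hd1β hm2 hm1) (by simp)
  · -- both avoid e n : derive that β is tight, contradiction
    obtain ⟨u1, hu1O, hγ1⟩ := hcase0 γ1 hst1 hd1α hm1
    obtain ⟨u2, hu2O, hγ2⟩ := hcase0 γ2 hst2 hd2α hm2
    by_cases hu : u1 = u2
    · rw [hγ1, hγ2, hu]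
    · exfalso
      have hβO : ∀ x ∈ β, x ∉ O := by
        intro x hxβ hxO
        have h1 : x = u1 := by
          have hh := Finset.disjoint_left.mp hd1β hxβ
          rw [hγ1, Finset.mem_erase] at hh
          push_neg at hh
          by_contra hne
          exact (hh hne) hxO
        have h2 : x = u2 := by
          have hh := Finset.disjoint_left.mp hd2β hxβ
          rw [hγ2, Finset.mem_erase] at hh
          push_neg at hh
          by_contra hne
          exact (hh hne) hxO
        exact hu (h1 ▸ h2)
      have hβE : β ⊆ E := by
        intro x hxβ
        rcases cover n i x with ⟨j, hj, rfl⟩ | ⟨j, hj, rfl⟩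
        · exact hmemE _ |>.mpr ⟨j, hj, rfl⟩
        · exact absurd (hmemO _ |>.mpr ⟨j, hj, rfl⟩) (hβO _ hxβ)
      obtain ⟨v, hvE, hβeq⟩ := extract E β hβ.1 hEcard hβE
      obtain ⟨k, hk, rfl⟩ := hmemE _ |>.mp hvE
      apply hβl
      refine ⟨i + 2*((k+1 : ℕ) : ZMod (2*n+2)), ?_⟩
      rw [hβeq]
      ext x
      simp only [Finset.mem_erase, Finset.mem_image, Finset.mem_range]
      constructor
      · rintro ⟨hxne, hxE⟩
        obtain ⟨j, hj, rfl⟩ := hmemE _ |>.mp hxE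
        have hjk : j ≠ k := by
          rintro rfl; exact hxne rfl
        have h0 : (2*(n:ZMod (2*n+2)) + 2) = 0 := by
          have := ZMod.natCast_self (2*n+2)
          push_cast at this
          linear_combination this
        by_cases hlt : k < j
        · refine ⟨j - (k+1), by omega, ?_⟩
          have hc : ((j - (k+1) : ℕ) : ZMod (2*n+2)) =
              (j : ZMod (2*n+2)) - ((k:ZMod (2*n+2))+1) :=
            by rw [Nat.cast_sub (show k+1 ≤ j by omega)]; push_cast; ring
          simp only [he]
          rw [hc]
          push_cast
          ring
        · refine ⟨j + n - k, by omega, ?_⟩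
          have hc : ((j + n - k : ℕ) : ZMod (2*n+2)) =
              (j : ZMod (2*n+2)) + n - k :=
            by rw [Nat.cast_sub (show k ≤ j + n by omega)]; push_cast; ring
          simp only [he]
          rw [hc]
          push_cast
          linear_combination h0
      · rintro ⟨m, hm, rfl⟩
        have h0 : (2*(n:ZMod (2*n+2)) + 2) = 0 := by
          have := ZMod.natCast_self (2*n+2)
          push_cast at this
          linear_combination this
        set j := if k + 1 + m ≤ n then k + 1 + m else k + m - n with hj
        have hjle : j ≤ n := by rw [hj]; split <;> omega
        have hjk : j ≠ k := by rw [hj]; split <;> omega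
        have hxe : i + 2*((k+1:ℕ) : ZMod (2*n+2)) + 2*(m : ZMod (2*n+2)) = e j := by
          simp only [he, hj]
          split
          · push_cast; ring
          · have hc : ((k + m - n : ℕ) : ZMod (2*n+2)) = (k : ZMod (2*n+2)) + m - n :=
              by rw [Nat.cast_sub (show n ≤ k + m by omega)]; push_cast; ring
            rw [hc]
            push_cast
            linear_combination h0
        rw [hxe]
        refine ⟨?_, hmemE _ |>.mpr ⟨j, hjle, rfl⟩⟩
        intro hc
        exact hjk (step_inj n i hjle hk hc)
end

section
/- Let n ≥ 2, let α be a tight stable n-set and β a loose stable n-set in ZMod (2n+2) with |α ∩ β| = n − 1. Then α and β have exactly two common neighbors in SG_{n,2}: one of them is a tight stable n-set whose elements have parity opposite to that of the elements of α and which is an outer neighbor of β, and the other is a loose stable n-set which is an immediate neighbor of β (i.e. equals β ⊕ 1 or β ⊖ 1). -/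
namespace TLAux

/-- `i + j` for a natural offset `j`. -/
def gg (n : ℕ) (i : ZMod (2 * n + 2)) (j : ℕ) : ZMod (2 * n + 2) := i + (j : ZMod (2 * n + 2))

/-- the offset of `x` from `i`. -/
def vv (n : ℕ) (i : ZMod (2 * n + 2)) (x : ZMod (2 * n + 2)) : ℕ := (x - i).val

lemma vv_lt (n : ℕ) (i x : ZMod (2 * n + 2)) : vv n i x < 2 * n + 2 := ZMod.val_lt _

lemma gg_vv (n : ℕ) (i x : ZMod (2 * n + 2)) : gg n i (vv n i x) = x := by
  have h : ((x - i).val : ZMod (2 * n + 2)) = x - i := ZMod.natCast_rightInverse (x - i)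
  simp only [gg, vv, h]
  ring

lemma gg_mod (n : ℕ) (i : ZMod (2 * n + 2)) (j : ℕ) : gg n i (j % (2 * n + 2)) = gg n i j := by
  simp [gg, ZMod.natCast_mod]

lemma vv_gg' (n : ℕ) (i : ZMod (2 * n + 2)) (j : ℕ) : vv n i (gg n i j) = j % (2 * n + 2) := by
  simp [gg, vv, ZMod.val_natCast]

lemma vv_gg (n : ℕ) (i : ZMod (2 * n + 2)) {j : ℕ} (h : j < 2 * n + 2) :
    vv n i (gg n i j) = j := by rw [vv_gg', Nat.mod_eq_of_lt h]

lemma eq_gg_iff' (n : ℕ) (i x : ZMod (2 * n + 2)) (j : ℕ) :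
    x = gg n i j ↔ vv n i x = j % (2 * n + 2) := by
  constructor
  · rintro rfl; exact vv_gg' n i j
  · intro h
    rw [← gg_vv n i x, h, gg_mod]

lemma gg_add_one (n : ℕ) (i : ZMod (2 * n + 2)) (j : ℕ) : gg n i j + 1 = gg n i (j + 1) := by
  simp [gg]; push_cast; ring

lemma gg_add_two_mul (n : ℕ) (i : ZMod (2 * n + 2)) (c k : ℕ) :
    gg n i c + 2 * (k : ZMod (2 * n + 2)) = gg n i (c + 2 * k) := by
  simp [gg]; push_cast; ring

lemma gg_sub_one (n : ℕ) (i : ZMod (2 * n + 2)) (j : ℕ) :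
    gg n i j - 1 = gg n i (j + (2 * n + 1)) := by
  have h0 : ((2 * n + 2 : ℕ) : ZMod (2 * n + 2)) = 0 := ZMod.natCast_self _
  simp only [gg]
  push_cast at h0 ⊢
  linear_combination -h0

lemma vv_succ (n : ℕ) (i x : ZMod (2 * n + 2)) :
    (vv n i x = 2 * n + 1 ∧ vv n i (x + 1) = 0) ∨
    (vv n i x < 2 * n + 1 ∧ vv n i (x + 1) = vv n i x + 1) := by
  have hx := vv_lt n i x
  have h : x + 1 = gg n i (vv n i x + 1) := by rw [← gg_add_one, gg_vv]
  by_cases hc : vv n i x = 2 * n + 1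
  · left
    refine ⟨hc, ?_⟩
    rw [h, hc]
    have e : 2 * n + 1 + 1 = 2 * n + 2 := by omega
    rw [e, vv_gg']
    exact Nat.mod_self _
  · right
    refine ⟨by omega, ?_⟩
    rw [h, vv_gg n i (by omega)]

lemma vv_pred (n : ℕ) (i x : ZMod (2 * n + 2)) :
    (vv n i x = 0 ∧ vv n i (x - 1) = 2 * n + 1) ∨
    (0 < vv n i x ∧ vv n i (x - 1) = vv n i x - 1) := by
  have hx := vv_lt n i x
  have h : x - 1 = gg n i (vv n i x + (2 * n + 1)) := by rw [← gg_sub_one, gg_vv]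
  by_cases hc : vv n i x = 0
  · left
    refine ⟨hc, ?_⟩
    rw [h, hc, vv_gg n i (by omega)]
    omega
  · right
    refine ⟨by omega, ?_⟩
    rw [h, vv_gg']
    have : vv n i x + (2 * n + 1) = (2 * n + 2) + (vv n i x - 1) := by omega
    rw [this, Nat.add_mod_left, Nat.mod_eq_of_lt (by omega)]

lemma mem_img (n : ℕ) (i : ZMod (2 * n + 2)) (r : ℕ) (f : ℕ → ℕ) (x : ZMod (2 * n + 2)) :
    x ∈ (Finset.range r).image (fun k => gg n i (f k)) ↔
      ∃ k < r, vv n i x = f k % (2 * n + 2) := by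
  simp only [Finset.mem_image, Finset.mem_range]
  constructor
  · rintro ⟨k, hk, rfl⟩
    exact ⟨k, hk, vv_gg' n i (f k)⟩
  · rintro ⟨k, hk, h⟩
    exact ⟨k, hk, ((eq_gg_iff' n i x (f k)).2 h).symm⟩

lemma card_img (n : ℕ) (i : ZMod (2 * n + 2)) (r : ℕ) (f : ℕ → ℕ)
    (hlt : ∀ k < r, f k < 2 * n + 2)
    (hinj : ∀ k < r, ∀ k' < r, f k = f k' → k = k') :
    ((Finset.range r).image (fun k => gg n i (f k))).card = r := by
  rw [Finset.card_image_of_injOn, Finset.card_range]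
  intro a ha b hb h
  simp only [Finset.coe_range, Set.mem_Iio] at ha hb
  have h' : gg n i (f a) = gg n i (f b) := h
  have : vv n i (gg n i (f a)) = vv n i (gg n i (f b)) := congrArg _ h'
  rw [vv_gg n i (hlt a ha), vv_gg n i (hlt b hb)] at this
  exact hinj a ha b hb this

lemma parity_gg (n : ℕ) (i : ZMod (2 * n + 2)) (j : ℕ) :
    parity n (gg n i j) = parity n i + (j : ZMod 2) := by
  simp [parity, gg, map_add, map_natCast]

lemma parity_ne (n : ℕ) (i : ZMod (2 * n + 2)) {j j' : ℕ} (h : j % 2 ≠ j' % 2) :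
    parity n (gg n i j) ≠ parity n (gg n i j') := by
  rw [parity_gg, parity_gg]
  intro hh
  have h2 : (j : ZMod 2) = (j' : ZMod 2) := by
    exact add_left_cancel hh
  rw [ZMod.natCast_eq_natCast_iff'] at h2
  exact h h2

lemma tight_parity (n : ℕ) {S : Finset (ZMod (2 * n + 2))} (h : IsTight n S) :
    ∀ x ∈ S, ∀ y ∈ S, parity n x = parity n y := by
  obtain ⟨i₀, rfl⟩ := h
  intro x hx y hy
  simp only [Finset.mem_image, Finset.mem_range] at hx hy
  obtain ⟨k, _, rfl⟩ := hx
  obtain ⟨k', _, rfl⟩ := hy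
  have e : ∀ k : ℕ, i₀ + 2 * (k : ZMod (2 * n + 2)) = gg n i₀ (2 * k) := by
    intro k; simp only [gg]; push_cast; ring
  rw [e k, e k', parity_gg, parity_gg]
  have : ∀ c : ℕ, ((2 * c : ℕ) : ZMod 2) = 0 := by
    intro c
    push_cast
    rw [show (2 : ZMod 2) = 0 from rfl]
    ring
  rw [this, this]

lemma mem_oplus_one (n : ℕ) (S : Finset (ZMod (2 * n + 2))) (x : ZMod (2 * n + 2)) :
    x ∈ oplus n S 1 ↔ x - 1 ∈ S := by
  simp only [oplus, Finset.mem_image]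
  constructor
  · rintro ⟨a, ha, rfl⟩; simpa using ha
  · intro h; exact ⟨x - 1, h, by ring⟩

lemma mem_ominus_one (n : ℕ) (S : Finset (ZMod (2 * n + 2))) (x : ZMod (2 * n + 2)) :
    x ∈ ominus n S 1 ↔ x + 1 ∈ S := by
  simp only [ominus, Finset.mem_image]
  constructor
  · rintro ⟨a, ha, rfl⟩; simpa using ha
  · intro h; exact ⟨x + 1, h, by ring⟩

lemma modm (n c : ℕ) (h : c < 2 * (2 * n + 2)) :
    c % (2 * n + 2) = if c < 2 * n + 2 then c else c - (2 * n + 2) := by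
  split_ifs with h1
  · exact Nat.mod_eq_of_lt h1
  · rw [Nat.mod_eq_sub_mod (by omega), Nat.mod_eq_of_lt (by omega)]

end TLAux

set_option maxHeartbeats 2000000 in
open TLAux in
/-- A tight stable n-set `α` and a loose stable n-set `β` with `|α ∩ β| = n - 1`
have exactly two common neighbors in `SG_{n,2}`: a tight one of parity opposite
to `α` which is an outer neighbor of `β`, and a loose one which is an immediate
neighbor of `β`. -/
theorem tight_loose_large_inter_common_neighbors (n : ℕ) (hn : 2 ≤ n)
    (α β : Finset (ZMod (2 * n + 2)))
    (hα : IsStable n α) (hαt : IsTight n α)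
    (hβ : IsStable n β) (hβl : ¬ IsTight n β)
    (hcap : (α ∩ β).card = n - 1) :
    ∃ γ₁ γ₂ : Finset (ZMod (2 * n + 2)), γ₁ ≠ γ₂ ∧
      {γ : Finset (ZMod (2 * n + 2)) |
        IsStable n γ ∧ Disjoint α γ ∧ Disjoint β γ} = {γ₁, γ₂} ∧
      IsStable n γ₁ ∧ IsTight n γ₁ ∧
      (∀ c ∈ γ₁, ∀ a ∈ α, parity n c ≠ parity n a) ∧
      OuterNbr n β γ₁ ∧
      IsStable n γ₂ ∧ ¬ IsTight n γ₂ ∧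
      (γ₂ = oplus n β 1 ∨ γ₂ = ominus n β 1) := by
  classical
  obtain ⟨i, hi⟩ := hαt
  have hveq : ∀ x y : ZMod (2*n+2), x = y ↔ vv n i x = vv n i y := by
    intro x y
    constructor
    · intro h; rw [h]
    · intro h; rw [← gg_vv n i x, h, gg_vv]
  have hgx : ∀ x : ZMod (2*n+2), ∀ j : ℕ, vv n i x = j → x = gg n i j := by
    intro x j h; rw [← gg_vv n i x, h]
  have hi' : α = (Finset.range n).image (fun k => gg n i (2 * k)) := by
    rw [hi]
    apply Finset.image_congr
    intro k _
    simp only [gg]; push_cast; ring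
  have hαc : ∀ x, x ∈ α ↔ (vv n i x % 2 = 0 ∧ vv n i x < 2 * n) := by
    intro x
    rw [hi', mem_img]
    constructor
    · rintro ⟨k, hk, hv⟩
      rw [Nat.mod_eq_of_lt (by omega)] at hv
      omega
    · intro h
      refine ⟨vv n i x / 2, by omega, ?_⟩
      rw [Nat.mod_eq_of_lt (by omega)]
      omega
  -- extract a and b
  have hsd1 : (α \ β).card = 1 := by
    have h := Finset.card_sdiff_add_card_inter α β
    have h2 := hα.1
    omega
  have hsd2 : (β \ α).card = 1 := by
    have h := Finset.card_sdiff_add_card_inter β α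
    rw [Finset.inter_comm] at h
    have h2 := hβ.1
    omega
  obtain ⟨a, ha⟩ := Finset.card_eq_one.mp hsd1
  obtain ⟨b, hb⟩ := Finset.card_eq_one.mp hsd2
  have haα : a ∈ α := (Finset.mem_sdiff.mp (ha ▸ Finset.mem_singleton_self a)).1
  have haβ : a ∉ β := (Finset.mem_sdiff.mp (ha ▸ Finset.mem_singleton_self a)).2
  have hbβ : b ∈ β := (Finset.mem_sdiff.mp (hb ▸ Finset.mem_singleton_self b)).1
  have hbα : b ∉ α := (Finset.mem_sdiff.mp (hb ▸ Finset.mem_singleton_self b)).2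
  have hβmem : ∀ x, x ∈ β ↔ ((x ∈ α ∧ x ≠ a) ∨ x = b) := by
    intro x
    constructor
    · intro hx
      by_cases hxa : x ∈ α
      · exact Or.inl ⟨hxa, fun h => haβ (h ▸ hx)⟩
      · have h2 : x ∈ β \ α := Finset.mem_sdiff.mpr ⟨hx, hxa⟩
        rw [hb, Finset.mem_singleton] at h2
        exact Or.inr h2
    · rintro (⟨hxα, hxa⟩ | rfl)
      · by_contra hxβ
        have h2 : x ∈ α \ β := Finset.mem_sdiff.mpr ⟨hxα, hxβ⟩
        rw [ha, Finset.mem_singleton] at h2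
        exact hxa h2
      · exact hbβ
  set js := vv n i a with hjsdef
  set jb := vv n i b with hjbdef
  have hjs : js % 2 = 0 ∧ js < 2*n := (hαc a).mp haα
  have hβc : ∀ x, x ∈ β ↔ ((vv n i x % 2 = 0 ∧ vv n i x < 2*n ∧ vv n i x ≠ js) ∨ vv n i x = jb) := by
    intro x
    simp only [hβmem x, hαc x, ne_eq, hveq x a, hveq x b, ← hjsdef, ← hjbdef]
    tauto
  have hjbn : ¬(jb % 2 = 0 ∧ jb < 2*n) := fun h => hbα ((hαc b).mpr h)
  have hjblt : jb < 2*n+2 := vv_lt n i b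
  -- rule out jb even (β would be tight)
  by_cases hjbe : jb % 2 = 0
  · exfalso
    apply hβl
    have hjb2n : jb = 2*n := by omega
    refine ⟨gg n i (js + 2), ?_⟩
    have himg : (Finset.range n).image (fun k : ℕ => gg n i (js+2) + 2*(k : ZMod (2*n+2)))
        = (Finset.range n).image (fun k => gg n i (js + 2 + 2*k)) := by
      apply Finset.image_congr
      intro k _
      exact gg_add_two_mul n i (js+2) k
    rw [himg]
    ext x
    rw [hβc x, mem_img]
    have hlt := vv_lt n i x
    constructor
    · intro hx
      rcases hx with ⟨he, hlt2, hne⟩ | hv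
      · by_cases hgt : js < vv n i x
        · refine ⟨(vv n i x - js - 2)/2, by omega, ?_⟩
          rw [modm n _ (by omega)]
          split_ifs <;> omega
        · refine ⟨(vv n i x + 2*n - js)/2, by omega, ?_⟩
          rw [modm n _ (by omega)]
          split_ifs <;> omega
      · refine ⟨(2*n - js - 2)/2, by omega, ?_⟩
        rw [modm n _ (by omega)]
        split_ifs <;> omega
    · rintro ⟨k, hk, hv⟩
      rw [modm n _ (by omega)] at hv
      split_ifs at hv <;> omega
  · have hjbo : jb % 2 = 1 := by omega
    -- stability constraints at b
    have hb1 : b + 1 ∉ β := fun h => hβ.2 b ⟨hbβ, h⟩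
    have hb2 : b - 1 ∉ β := fun h => hβ.2 (b-1) ⟨h, by rwa [sub_add_cancel]⟩
    rw [hβc (b+1)] at hb1
    rw [hβc (b-1)] at hb2
    have hs1 := vv_succ n i b
    have hs2 := vv_pred n i b
    rw [← hjbdef] at hs1 hs2
    have hcase : (js = 0 ∧ jb = 2*n+1) ∨ (js = 2*n-2 ∧ jb = 2*n-1) := by omega
    -- define the two common neighbors
    set C : Finset (ZMod (2*n+2)) := (Finset.range (n+1)).image (fun k => gg n i (2*k+1)) with hC
    set D : Finset (ZMod (2*n+2)) := (Finset.range (n-1)).image (fun k => gg n i (2*k+1)) with hD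
    set G1 : Finset (ZMod (2*n+2)) := C.erase b with hG1
    set G2 : Finset (ZMod (2*n+2)) := insert (gg n i (2*n)) D with hG2
    have hCc : ∀ x, x ∈ C ↔ vv n i x % 2 = 1 := by
      intro x
      rw [hC, mem_img]
      have hlt := vv_lt n i x
      constructor
      · rintro ⟨k, hk, hv⟩
        rw [Nat.mod_eq_of_lt (by omega)] at hv
        omega
      · intro h
        refine ⟨(vv n i x - 1)/2, by omega, ?_⟩
        rw [Nat.mod_eq_of_lt (by omega)]
        omega
    have hDc : ∀ x, x ∈ D ↔ (vv n i x % 2 = 1 ∧ vv n i x < 2*n - 2) := by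
      intro x
      rw [hD, mem_img]
      have hlt := vv_lt n i x
      constructor
      · rintro ⟨k, hk, hv⟩
        rw [Nat.mod_eq_of_lt (by omega)] at hv
        omega
      · intro h
        refine ⟨(vv n i x - 1)/2, by omega, ?_⟩
        rw [Nat.mod_eq_of_lt (by omega)]
        omega
    have hG1c : ∀ x, x ∈ G1 ↔ (vv n i x % 2 = 1 ∧ vv n i x ≠ jb) := by
      intro x
      rw [hG1, Finset.mem_erase, hCc]
      constructor
      · rintro ⟨h1, h2⟩
        exact ⟨h2, fun hh => h1 ((hveq x b).mpr hh)⟩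
      · rintro ⟨h1, h2⟩
        exact ⟨fun hh => h2 ((hveq x b).mp hh), h1⟩
    have hvgg2n : vv n i (gg n i (2*n)) = 2*n := vv_gg n i (by omega)
    have hG2c : ∀ x, x ∈ G2 ↔ (vv n i x = 2*n ∨ (vv n i x % 2 = 1 ∧ vv n i x < 2*n-2)) := by
      intro x
      rw [hG2, Finset.mem_insert, hDc, hveq x (gg n i (2*n)), hvgg2n]
    have hCcard : C.card = n+1 := by
      rw [hC]
      exact card_img n i (n+1) _ (fun k hk => by omega) (fun k hk k' hk' h => by omega)
    have hDcard : D.card = n-1 := by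
      rw [hD]
      exact card_img n i (n-1) _ (fun k hk => by omega) (fun k hk k' hk' h => by omega)
    have hbC : b ∈ C := (hCc b).mpr hjbo
    have hG1card : G1.card = n := by
      rw [hG1, Finset.card_erase_of_mem hbC, hCcard]
      omega
    have hG2card : G2.card = n := by
      rw [hG2, Finset.card_insert_of_notMem (fun h => by rw [hDc, hvgg2n] at h; omega), hDcard]
      omega
    -- stability
    have hG1s : IsStable n G1 := by
      refine ⟨hG1card, ?_⟩
      intro x hx
      rw [hG1c x, hG1c (x+1)] at hx
      have h := vv_succ n i x
      omega
    have hG2s : IsStable n G2 := by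
      refine ⟨hG2card, ?_⟩
      intro x hx
      rw [hG2c x, hG2c (x+1)] at hx
      have h := vv_succ n i x
      omega
    -- disjointness
    have hdαG1 : Disjoint α G1 := Finset.disjoint_left.mpr (fun {x} hxα hxγ => by
      rw [hαc] at hxα; rw [hG1c] at hxγ; omega)
    have hdβG1 : Disjoint β G1 := Finset.disjoint_left.mpr (fun {x} hxβ hxγ => by
      rw [hβc] at hxβ; rw [hG1c] at hxγ; omega)
    have hdαG2 : Disjoint α G2 := Finset.disjoint_left.mpr (fun {x} hxα hxγ => by
      rw [hαc] at hxα; rw [hG2c] at hxγ; omega)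
    have hdβG2 : Disjoint β G2 := Finset.disjoint_left.mpr (fun {x} hxβ hxγ => by
      rw [hβc] at hxβ; rw [hG2c] at hxγ; omega)
    -- the set of common neighbors
    have hset : {γ : Finset (ZMod (2*n+2)) | IsStable n γ ∧ Disjoint α γ ∧ Disjoint β γ}
        = {G1, G2} := by
      ext γ
      simp only [Set.mem_setOf_eq, Set.mem_insert_iff, Set.mem_singleton_iff]
      constructor
      · rintro ⟨hγs, hdα, hdβ⟩
        have hmem : ∀ x ∈ γ, ¬(vv n i x % 2 = 0 ∧ vv n i x < 2*n) ∧
            ¬((vv n i x % 2 = 0 ∧ vv n i x < 2*n ∧ vv n i x ≠ js) ∨ vv n i x = jb) := by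
          intro x hx
          exact ⟨fun h => (Finset.disjoint_right.mp hdα hx) ((hαc x).mpr h),
            fun h => (Finset.disjoint_right.mp hdβ hx) ((hβc x).mpr h)⟩
        by_cases hc : gg n i (2*n) ∈ γ
        · right
          have h3 : gg n i (2*n-1) ∉ γ := by
            intro h
            apply hγs.2 (gg n i (2*n-1))
            refine ⟨h, ?_⟩
            rw [gg_add_one]
            have e : 2*n-1+1 = 2*n := by omega
            rw [e]
            exact hc
          have h4 : gg n i (2*n+1) ∉ γ := by
            intro h
            exact hγs.2 (gg n i (2*n)) ⟨hc, by rw [gg_add_one]; exact h⟩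
          have hsub : γ.erase (gg n i (2*n)) ⊆ D := by
            intro x hx
            rw [Finset.mem_erase] at hx
            obtain ⟨hne, hxγ⟩ := hx
            have hm := hmem x hxγ
            have hlt := vv_lt n i x
            rw [hDc]
            have hne1 : vv n i x ≠ 2*n := fun h => hne (hgx x (2*n) h)
            have hne2 : vv n i x ≠ 2*n-1 := fun h => h3 (hgx x (2*n-1) h ▸ hxγ)
            have hne3 : vv n i x ≠ 2*n+1 := fun h => h4 (hgx x (2*n+1) h ▸ hxγ)
            omega
          have hcard : (γ.erase (gg n i (2*n))).card = n-1 := by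
            rw [Finset.card_erase_of_mem hc, hγs.1]
          have heq : γ.erase (gg n i (2*n)) = D :=
            Finset.eq_of_subset_of_card_le hsub (by omega)
          rw [hG2, ← heq]
          exact (Finset.insert_erase hc).symm
        · left
          have hsub : γ ⊆ C := by
            intro x hxγ
            have hm := hmem x hxγ
            have hlt := vv_lt n i x
            rw [hCc]
            have hne1 : vv n i x ≠ 2*n := fun h => hc (hgx x (2*n) h ▸ hxγ)
            omega
          have hsd : (C \ γ).card = 1 := by
            rw [Finset.card_sdiff_of_subset hsub, hCcard, hγs.1]
            omega
          obtain ⟨c, hc1⟩ := Finset.card_eq_one.mp hsd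
          have hγeq : γ = C.erase c := by
            have h1 : C \ (C \ γ) = γ := by
              rw [Finset.sdiff_sdiff_self_left]
              exact Finset.inter_eq_right.mpr hsub
            rw [← h1, hc1, Finset.sdiff_singleton_eq_erase]
          have hbc : b = c := by
            have hbnot : b ∉ γ := Finset.disjoint_left.mp hdβ hbβ
            have h2 : b ∈ C \ γ := Finset.mem_sdiff.mpr ⟨hbC, hbnot⟩
            rw [hc1, Finset.mem_singleton] at h2
            exact h2
          rw [hG1, hγeq, hbc]
      · rintro (rfl | rfl)
        · exact ⟨hG1s, hdαG1, hdβG1⟩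
        · exact ⟨hG2s, hdαG2, hdβG2⟩
    -- G1 ≠ G2
    have hne12 : G1 ≠ G2 := by
      intro h
      have h2n : gg n i (2*n) ∈ G2 := (hG2c _).mpr (Or.inl hvgg2n)
      rw [← h, hG1c, hvgg2n] at h2n
      omega
    -- G1 is tight
    have hG1t : IsTight n G1 := by
      refine ⟨b + 2, ?_⟩
      have himg : (Finset.range n).image (fun k : ℕ => (b+2) + 2*(k : ZMod (2*n+2)))
          = (Finset.range n).image (fun k => gg n i (jb + 2 + 2*k)) := by
        apply Finset.image_congr
        intro k _
        rw [show b = gg n i jb from (gg_vv n i b).symm]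
        simp only [gg]
        push_cast
        ring
      rw [himg]
      ext x
      rw [hG1c, mem_img]
      have hlt := vv_lt n i x
      constructor
      · rintro ⟨ho, hne⟩
        by_cases hgt : jb < vv n i x
        · refine ⟨(vv n i x - jb - 2)/2, by omega, ?_⟩
          rw [modm n _ (by omega)]
          split_ifs <;> omega
        · refine ⟨(vv n i x + 2*n - jb)/2, by omega, ?_⟩
          rw [modm n _ (by omega)]
          split_ifs <;> omega
      · rintro ⟨k, hk, hv⟩
        rw [modm n _ (by omega)] at hv
        split_ifs at hv <;> omega
    -- parity
    have hpar : ∀ c ∈ G1, ∀ a' ∈ α, parity n c ≠ parity n a' := by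
      intro c hcγ a' ha'
      rw [hG1c] at hcγ
      rw [hαc] at ha'
      rw [← gg_vv n i c, ← gg_vv n i a']
      exact parity_ne n i (by omega)
    -- OuterNbr
    have houter : OuterNbr n β G1 := by
      refine ⟨hdβG1, b, hbβ, ?_⟩
      have hbb : b + 1 + 1 = b + 2 := by ring
      have ht1 := vv_succ n i b
      have ht2 := vv_succ n i (b+1)
      rw [hbb] at ht2
      rw [← hjbdef] at ht1
      ext x
      rw [hG1c, Finset.mem_union, mem_oplus_one, Finset.mem_erase, Finset.mem_singleton, hβc]
      simp only [ne_eq, hveq (x-1) b, hveq x (b+2), ← hjbdef]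
      have hp := vv_pred n i x
      have hl1 := vv_lt n i x
      have hl2 := vv_lt n i (x-1)
      have hl3 := vv_lt n i (b+2)
      omega
    -- G2 not tight
    have hG2nt : ¬ IsTight n G2 := by
      intro ht
      have h1 : gg n i (2*n) ∈ G2 := (hG2c _).mpr (Or.inl hvgg2n)
      have h2 : gg n i 1 ∈ G2 := (hG2c _).mpr (Or.inr ⟨by rw [vv_gg n i (by omega)],
        by rw [vv_gg n i (by omega)]; omega⟩)
      exact parity_ne n i (j := 2*n) (j' := 1) (by omega) (tight_parity n ht _ h1 _ h2)
    -- final disjunction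
    have hfin : G2 = oplus n β 1 ∨ G2 = ominus n β 1 := by
      rcases hcase with ⟨hjs0, hjb0⟩ | ⟨hjs0, hjb0⟩
      · right
        ext x
        rw [hG2c, mem_ominus_one, hβc]
        have hs := vv_succ n i x
        have hlt := vv_lt n i x
        omega
      · left
        ext x
        rw [hG2c, mem_oplus_one, hβc]
        have hp := vv_pred n i x
        have hlt := vv_lt n i x
        omega
    exact ⟨G1, G2, hne12, hset, hG1s, hG1t, hpar, houter, hG2s, hG2nt, hfin⟩
end

section
/- Let n ≥ 1, let α be a loose stable n-set in ZMod (2n+2), and let β be an outer neighbor of α. Then |β ∩ (α ⊕ 1)| = n − 1 and |β ∩ (α ⊖ 1)| = n − 1. -/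
lemma mem_oplus {n : ℕ} {α : Finset (ZMod (2 * n + 2))} {j x : ZMod (2 * n + 2)} :
    x ∈ oplus n α j ↔ x - j ∈ α := by
  simp only [oplus, Finset.mem_image]
  constructor
  · rintro ⟨a, ha, rfl⟩; simpa using ha
  · intro h; exact ⟨x - j, h, by ring⟩

lemma mem_ominus {n : ℕ} {α : Finset (ZMod (2 * n + 2))} {j x : ZMod (2 * n + 2)} :
    x ∈ ominus n α j ↔ x + j ∈ α := by
  simp only [ominus, Finset.mem_image]
  constructor
  · rintro ⟨a, ha, rfl⟩; simpa using ha
  · intro h; exact ⟨x + j, h, by ring⟩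

lemma card_oplus {n : ℕ} (α : Finset (ZMod (2 * n + 2))) (j : ZMod (2 * n + 2)) :
    (oplus n α j).card = α.card :=
  Finset.card_image_of_injective _ (add_left_injective j)

lemma card_ominus {n : ℕ} (α : Finset (ZMod (2 * n + 2))) (j : ZMod (2 * n + 2)) :
    (ominus n α j).card = α.card :=
  Finset.card_image_of_injective _ sub_left_injective

lemma natCast_inj'_s12 {n : ℕ} {j k : ℕ} (hj : j < 2 * n + 2) (hk : k < 2 * n + 2)
    (h : (j : ZMod (2 * n + 2)) = (k : ZMod (2 * n + 2))) : j = k := by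
  have := congrArg ZMod.val h
  rwa [ZMod.val_cast_of_lt hj, ZMod.val_cast_of_lt hk] at this

lemma tight_of_pred (n : ℕ) (α : Finset (ZMod (2 * n + 2))) (hα : IsStable n α)
    (d : ZMod (2 * n + 2)) (hd : d ∈ α) (hpred : ∀ x ∈ α, x ≠ d → x - 2 ∈ α) :
    IsTight n α := by
  set f : ℕ → ZMod (2 * n + 2) := fun k => d + 2 * (k : ZMod (2 * n + 2)) with hf
  have hzero : (2 * ((n + 1 : ℕ) : ZMod (2 * n + 2))) = 0 := by
    have h0 : ((2 * n + 2 : ℕ) : ZMod (2 * n + 2)) = 0 := ZMod.natCast_self _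
    push_cast at h0 ⊢
    linear_combination h0
  have hcastinj : ∀ j ≤ n, ∀ k ≤ n,
      (2 : ZMod (2 * n + 2)) * (j : ZMod (2 * n + 2)) = 2 * (k : ZMod (2 * n + 2)) → j = k := by
    intro j hj k hk h
    have h2 : ((2 * j : ℕ) : ZMod (2 * n + 2)) = ((2 * k : ℕ) : ZMod (2 * n + 2)) := by
      push_cast; linear_combination h
    have := natCast_inj'_s12 (by omega) (by omega) h2
    omega
  have key : ∀ x ∈ α, ∃ k ≤ n, x = f k := by
    intro x hx
    by_contra hcon
    push_neg at hcon
    have chain : ∀ j : ℕ, x - 2 * (j : ZMod (2 * n + 2)) ∈ α ∧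
        ∀ k ≤ n, x - 2 * (j : ZMod (2 * n + 2)) ≠ f k := by
      intro j
      induction j with
      | zero => simpa using ⟨hx, hcon⟩
      | succ j ih =>
        have h1 : x - 2 * ((j : ℕ) : ZMod (2 * n + 2)) ≠ d := by
          have := ih.2 0 (Nat.zero_le n)
          simpa [hf] using this
        have h2 : x - 2 * (((j + 1 : ℕ)) : ZMod (2 * n + 2)) ∈ α := by
          have := hpred _ ih.1 h1
          have he : x - 2 * (((j + 1 : ℕ)) : ZMod (2 * n + 2)) =
              x - 2 * ((j : ℕ) : ZMod (2 * n + 2)) - 2 := by push_cast; ring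
          rwa [he]
        refine ⟨h2, ?_⟩
        intro k hk heq
        rcases Nat.lt_or_ge k n with h | h
        · refine ih.2 (k + 1) (by omega) ?_
          simp only [hf] at heq ⊢
          push_cast at heq ⊢
          linear_combination heq
        · have hk' : k = n := le_antisymm hk h
          apply h1
          rw [hk'] at heq
          simp only [hf] at heq
          have : x - 2 * ((j : ℕ) : ZMod (2 * n + 2)) =
              d + 2 * (((n + 1 : ℕ)) : ZMod (2 * n + 2)) := by
            push_cast at heq ⊢; linear_combination heq
          rw [hzero] at this
          simpa using this
    have hinj : Set.InjOn (fun j : ℕ => x - 2 * (j : ZMod (2 * n + 2)))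
        (Finset.range (n + 1)) := by
      intro j hj k hk h
      simp only [Finset.coe_range, Set.mem_Iio] at hj hk
      apply hcastinj j (by omega) k (by omega)
      have : (2 : ZMod (2 * n + 2)) * (j : ZMod (2 * n + 2)) - 2 * (k : ZMod (2 * n + 2)) = 0 := by
        linear_combination -h
      linear_combination this
    have hmaps : ∀ j ∈ Finset.range (n + 1), x - 2 * (j : ZMod (2 * n + 2)) ∈ α :=
      fun j _ => (chain j).1
    have := Finset.card_le_card_of_injOn _ hmaps hinj
    rw [Finset.card_range, hα.1] at this
    omega
  set T := (Finset.range (n + 1)).filter (fun k => f k ∈ α) with hT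
  have hαT : α = T.image f := by
    ext x
    simp only [hT, Finset.mem_image, Finset.mem_filter, Finset.mem_range]
    constructor
    · intro hx
      obtain ⟨k, hk, rfl⟩ := key x hx
      exact ⟨k, ⟨by omega, hx⟩, rfl⟩
    · rintro ⟨k, ⟨_, hk⟩, rfl⟩; exact hk
  have hfinjT : Set.InjOn f T := by
    intro j hj k hk h
    simp only [hT, Finset.coe_filter, Set.mem_setOf_eq, Finset.mem_range] at hj hk
    apply hcastinj j (by omega) k (by omega)
    simp only [hf] at h
    linear_combination h
  have hTcard : T.card = n := by
    have := Finset.card_image_of_injOn hfinjT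
    rw [← hαT] at this
    rw [← this, hα.1]
  have hdown : ∀ k, k < n → (k + 1) ∈ T → k ∈ T := by
    intro k hk hkT
    simp only [hT, Finset.mem_filter, Finset.mem_range] at hkT ⊢
    refine ⟨by omega, ?_⟩
    have hne : f (k + 1) ≠ d := by
      intro h
      have h2 : (2 : ZMod (2 * n + 2)) * ((k + 1 : ℕ) : ZMod (2 * n + 2)) =
          2 * ((0 : ℕ) : ZMod (2 * n + 2)) := by
        simp only [hf] at h
        push_cast at h ⊢
        linear_combination h
      have := hcastinj (k + 1) (by omega) 0 (by omega) h2
      omega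
    have := hpred _ hkT.2 hne
    have he : f (k + 1) - 2 = f k := by simp only [hf]; push_cast; ring
    rwa [he] at this
  have hnT : n ∉ T := by
    intro hnT
    have hall : ∀ j, j ≤ n → n - j ∈ T := by
      intro j
      induction j with
      | zero => intro _; simpa using hnT
      | succ j ih =>
        intro hj
        have h1 := ih (by omega)
        have h2 : n - (j + 1) + 1 = n - j := by omega
        exact hdown _ (by omega) (by rw [h2]; exact h1)
    have hsub : Finset.range (n + 1) ⊆ T := by
      intro k hk
      simp only [Finset.mem_range] at hk
      have := hall (n - k) (by omega)
      rwa [show n - (n - k) = k by omega] at this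
    have := Finset.card_le_card hsub
    rw [Finset.card_range, hTcard] at this
    omega
  have hTr : T = Finset.range n := by
    apply Finset.eq_of_subset_of_card_le
    · intro k hk
      have hk' := hk
      simp only [hT, Finset.mem_filter, Finset.mem_range] at hk'
      simp only [Finset.mem_range]
      rcases Nat.lt_or_ge k n with h | h
      · exact h
      · exfalso; apply hnT; rwa [show n = k by omega]
    · rw [Finset.card_range, hTcard]
  exact ⟨d, by rw [hαT, hTr]⟩


/-- If `β` is an outer neighbor of a loose stable n-set `α`, then
`|β ∩ (α ⊕ 1)| = n - 1` and `|β ∩ (α ⊖ 1)| = n - 1`. -/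
theorem outer_neighbor_inter_immediate (n : ℕ) (hn : 1 ≤ n)
    (α β : Finset (ZMod (2 * n + 2)))
    (hα : IsStable n α) (hαl : ¬ IsTight n α)
    (hβ : IsStable n β) (hout : OuterNbr n α β) :
    (β ∩ oplus n α 1).card = n - 1 ∧ (β ∩ ominus n α 1).card = n - 1 := by
  obtain ⟨hdisj, a, ha, hβeq⟩ := hout
  have hstab : ∀ x : ZMod (2 * n + 2), x ∈ α → x + 1 ∉ α := by
    intro x hx h; exact hα.2 x ⟨hx, h⟩
  have ha1 : a + 1 ∉ α := hstab a ha
  have ha2β : a + 2 ∈ β := by rw [hβeq]; simp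
  have ha2 : a + 2 ∉ α := fun h => (Finset.disjoint_left.mp hdisj h) ha2β
  have hmemβ : ∀ x : ZMod (2 * n + 2), x ∈ β ↔ (x - 1 ∈ α.erase a ∨ x = a + 2) := by
    intro x
    rw [hβeq]
    simp [mem_oplus]
    exact or_comm
  -- Part 1
  have h1set : β ∩ oplus n α 1 = oplus n (α.erase a) 1 := by
    ext x
    simp only [Finset.mem_inter, hmemβ, mem_oplus]
    constructor
    · rintro ⟨h1 | h2, h3⟩
      · exact h1
      · exfalso; apply ha1; rw [show a + 1 = x - 1 by rw [h2]; ring]; exact h3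
    · intro h
      exact ⟨Or.inl h, Finset.mem_of_mem_erase h⟩
  have h1 : (β ∩ oplus n α 1).card = n - 1 := by
    rw [h1set, card_oplus, Finset.card_erase_of_mem ha, hα.1]
  -- the key cardinality fact
  -- D := elements of α without a predecessor-by-2 in α
  have hD : 2 ≤ (α \ oplus n α 2).card := by
    by_contra hcon
    push_neg at hcon
    apply hαl
    interval_cases h : (α \ oplus n α 2).card
    · -- empty
      have hemp : α \ oplus n α 2 = ∅ := Finset.card_eq_zero.mp h
      obtain ⟨d, hd⟩ := Finset.card_pos.mp (by rw [hα.1]; omega : 0 < α.card)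
      refine tight_of_pred n α hα d hd ?_
      intro x hx _
      have : x ∈ oplus n α 2 := by
        by_contra hnx
        have : x ∈ α \ oplus n α 2 := Finset.mem_sdiff.mpr ⟨hx, hnx⟩
        rw [hemp] at this; simp at this
      rwa [mem_oplus] at this
    · -- singleton
      obtain ⟨d, hd⟩ := Finset.card_eq_one.mp h
      have hdα : d ∈ α := by
        have : d ∈ α \ oplus n α 2 := by rw [hd]; simp
        exact (Finset.mem_sdiff.mp this).1
      refine tight_of_pred n α hα d hdα ?_
      intro x hx hxd
      have : x ∈ oplus n α 2 := by
        by_contra hnx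
        have : x ∈ α \ oplus n α 2 := Finset.mem_sdiff.mpr ⟨hx, hnx⟩
        rw [hd] at this
        simp at this
        exact hxd this
      rwa [mem_oplus] at this
  have h2n : 2 ≤ n := by
    have := Finset.card_le_card (Finset.sdiff_subset : α \ oplus n α 2 ⊆ α)
    rw [hα.1] at this; omega
  -- card of α ∩ (α ⊕ 2)
  have hpart : (α ∩ oplus n α 2).card + (α \ oplus n α 2).card = n := by
    rw [Finset.card_inter_add_card_sdiff, hα.1]
  -- relate ominus and oplus intersections
  have hcard_eq : (α ∩ ominus n α 2).card = (α ∩ oplus n α 2).card := by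
    have himg : (α ∩ ominus n α 2).image (fun x => x + 2) = oplus n α 2 ∩ α := by
      ext x
      simp only [Finset.mem_image, Finset.mem_inter, mem_ominus, mem_oplus]
      constructor
      · rintro ⟨y, ⟨hy1, hy2⟩, rfl⟩
        exact ⟨by simpa using hy1, hy2⟩
      · rintro ⟨h1, h2⟩
        exact ⟨x - 2, ⟨h1, by simpa using h2⟩, by ring⟩
    calc (α ∩ ominus n α 2).card
        = ((α ∩ ominus n α 2).image (fun x => x + 2)).card :=
          (Finset.card_image_of_injective _ (add_left_injective 2)).symm
      _ = (oplus n α 2 ∩ α).card := by rw [himg]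
      _ = (α ∩ oplus n α 2).card := by rw [Finset.inter_comm]
  -- union bound
  have hsub : α ∪ ominus n α 2 ⊆ (ominus n α 1)ᶜ := by
    intro x hx
    rw [Finset.mem_compl, mem_ominus]
    rcases Finset.mem_union.mp hx with h | h
    · exact hstab x h
    · rw [mem_ominus] at h
      intro hx1
      exact hstab (x + 1) hx1 (by rwa [show x + 1 + 1 = x + 2 by ring])
  have hcompl_card : ((ominus n α 1)ᶜ : Finset (ZMod (2 * n + 2))).card = n + 2 := by
    rw [Finset.card_compl, card_ominus, hα.1, ZMod.card]
    omega
  have hunion_le : (α ∪ ominus n α 2).card ≤ n + 2 := by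
    rw [← hcompl_card]; exact Finset.card_le_card hsub
  have hui : (α ∪ ominus n α 2).card + (α ∩ ominus n α 2).card = n + n := by
    rw [Finset.card_union_add_card_inter, hα.1, card_ominus, hα.1]
  have hDle : (α \ oplus n α 2).card ≤ 2 := by omega
  have hinter : (α ∩ ominus n α 2).card = n - 2 := by omega
  have hunion : (α ∪ ominus n α 2).card = n + 2 := by omega
  have hueq : α ∪ ominus n α 2 = (ominus n α 1)ᶜ := by
    apply Finset.eq_of_subset_of_card_le hsub
    rw [hcompl_card, hunion]
  -- a + 3 ∈ α
  have ha3 : a + 3 ∈ α := by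
    have h1 : a + 1 ∈ (ominus n α 1)ᶜ := by
      rw [Finset.mem_compl, mem_ominus]
      rwa [show a + 1 + 1 = a + 2 by ring]
    rw [← hueq] at h1
    rcases Finset.mem_union.mp h1 with h | h
    · exact absurd h ha1
    · rw [mem_ominus] at h
      rwa [show a + 1 + 2 = a + 3 by ring] at h
  -- Part 2
  set S := α.erase a ∩ ominus n α 2 with hS
  have hSeq : S = α ∩ ominus n α 2 := by
    rw [hS, Finset.erase_inter]
    apply Finset.erase_eq_of_notMem
    rw [Finset.mem_inter, mem_ominus]
    rintro ⟨-, h⟩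
    exact ha2 h
  have h2set : β ∩ ominus n α 1 = oplus n S 1 ∪ {a + 2} := by
    ext x
    simp only [Finset.mem_inter, hmemβ, mem_ominus, Finset.mem_union, Finset.mem_singleton,
      mem_oplus, hS]
    constructor
    · rintro ⟨h1 | h2, h3⟩
      · exact Or.inl ⟨h1, by rwa [show x - 1 + 2 = x + 1 by ring]⟩
      · right; exact h2
    · rintro (⟨hh1, hh2⟩ | h)
      · exact ⟨Or.inl hh1, by rwa [show x - 1 + 2 = x + 1 by ring] at hh2⟩
      · subst h
        exact ⟨Or.inr rfl, by rwa [show a + 2 + 1 = a + 3 by ring]⟩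
  have hnotin : a + 2 ∉ oplus n S 1 := by
    rw [mem_oplus, hSeq, Finset.mem_inter]
    rintro ⟨h, -⟩
    apply ha1
    rwa [show a + 2 - 1 = a + 1 by ring] at h
  have h2 : (β ∩ ominus n α 1).card = n - 1 := by
    rw [h2set, Finset.card_union_of_disjoint (by simpa using hnotin), card_oplus,
      Finset.card_singleton, hSeq, hinter]
    omega
  exact ⟨h1, h2⟩
end

section
/- Let n ≥ 1, let α be a loose stable n-set in ZMod (2n+2), and let β₁ ≠ β₂ be two outer neighbors of α. Then α is the unique common neighbor of β₁ and β₂ in SG_{n,2}: the only stable n-set disjoint from both β₁ and β₂ is α. (Hence the edge {β₁, β₂} of the neighborhood complex of SG_{n,2} is contained in a unique facet.) -/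
/-- If `β₁ ≠ β₂` are two outer neighbors of a loose stable n-set `α`, then `α`
is the unique common neighbor of `β₁` and `β₂` in `SG_{n,2}`. -/
theorem outer_neighbors_unique_common_neighbor (n : ℕ) (hn : 1 ≤ n)
    (α β₁ β₂ : Finset (ZMod (2 * n + 2)))
    (hα : IsStable n α) (hαl : ¬ IsTight n α)
    (hβ₁ : IsStable n β₁) (hout₁ : OuterNbr n α β₁)
    (hβ₂ : IsStable n β₂) (hout₂ : OuterNbr n α β₂)
    (hne : β₁ ≠ β₂) :
    {γ : Finset (ZMod (2 * n + 2)) |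
      IsStable n γ ∧ Disjoint γ β₁ ∧ Disjoint γ β₂} = {α} := by
  classical
  -- extract the data of the two outer neighbors
  obtain ⟨hd₁, a, ha, hb₁⟩ := hout₁
  obtain ⟨hd₂, b, hb, hb₂⟩ := hout₂
  have hab : a ≠ b := by
    intro h; apply hne; rw [hb₁, hb₂, h]
  set f : ZMod (2 * n + 2) → ZMod (2 * n + 2) := fun x => x + 1 with hf
  have hinj : Function.Injective f := fun x y h => by
    simpa [hf] using h
  -- the union of the two neighbors
  have herase : α.erase a ∪ α.erase b = α := by
    ext x
    simp only [Finset.mem_union, Finset.mem_erase]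
    constructor
    · rintro (⟨_, h⟩ | ⟨_, h⟩) <;> exact h
    · intro hx
      by_cases hxa : x = a
      · exact Or.inr ⟨by rw [hxa]; exact hab, hx⟩
      · exact Or.inl ⟨hxa, hx⟩
  have hU : β₁ ∪ β₂ = α.image f ∪ {a + 2, b + 2} := by
    rw [hb₁, hb₂]
    have : oplus n (α.erase a) 1 ∪ {a + 2} ∪ (oplus n (α.erase b) 1 ∪ {b + 2})
        = (oplus n (α.erase a) 1 ∪ oplus n (α.erase b) 1) ∪ ({a + 2} ∪ {b + 2}) := by
      ext x; simp only [Finset.mem_union]; tauto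
    rw [this]
    congr 1
    rw [oplus, oplus, ← Finset.image_union, herase]
  -- cardinality facts
  have hnotmem : ∀ c ∈ α, c + 2 ∉ α.image f := by
    intro c hc h
    obtain ⟨d, hd, hdc⟩ := Finset.mem_image.mp h
    have : d = c + 1 := by
      simp only [hf] at hdc
      have : d + 1 = c + 1 + 1 := by rw [hdc]; ring
      exact add_right_cancel this
    subst this
    exact hα.2 c ⟨hc, hd⟩
  have hcardU : (β₁ ∪ β₂).card = n + 2 := by
    rw [hU]
    have hdisj : Disjoint (α.image f) {a + 2, b + 2} := by
      rw [Finset.disjoint_right]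
      intro x hx hx2
      rcases Finset.mem_insert.mp hx with h | h
      · subst h; exact hnotmem a ha hx2
      · rw [Finset.mem_singleton] at h; subst h; exact hnotmem b hb hx2
    rw [Finset.card_union_of_disjoint hdisj,
      Finset.card_image_of_injective _ hinj, hα.1]
    have : ({a + 2, b + 2} : Finset (ZMod (2 * n + 2))).card = 2 := by
      rw [Finset.card_insert_of_notMem (by
        simp only [Finset.mem_singleton]
        intro h
        exact hab (by
          have := add_right_cancel h
          exact this)), Finset.card_singleton]
    omega
  -- complement of the union has exactly n elements
  have hcardc : (β₁ ∪ β₂)ᶜ.card = n := by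
    rw [Finset.card_compl, hcardU, ZMod.card]
    omega
  -- every common neighbor equals the complement of the union
  have key : ∀ γ : Finset (ZMod (2 * n + 2)), IsStable n γ → Disjoint γ β₁ →
      Disjoint γ β₂ → γ = (β₁ ∪ β₂)ᶜ := by
    intro γ hγ h1 h2
    have hsub : γ ⊆ (β₁ ∪ β₂)ᶜ := by
      intro x hx
      rw [Finset.mem_compl, Finset.mem_union]
      rintro (h | h)
      · exact Finset.disjoint_left.mp h1 hx h
      · exact Finset.disjoint_left.mp h2 hx h
    exact Finset.eq_of_subset_of_card_le hsub (by rw [hγ.1, hcardc])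
  have hαeq : α = (β₁ ∪ β₂)ᶜ := key α hα hd₁ hd₂
  ext γ
  simp only [Set.mem_setOf_eq, Set.mem_singleton_iff]
  constructor
  · rintro ⟨hγ, h1, h2⟩
    rw [key γ hγ h1 h2, ← hαeq]
  · rintro rfl
    exact ⟨hα, hd₁, hd₂⟩
end

section
/- Let n ≥ 1, let α be a tight stable n-set in ZMod (2n+2), let η be its unique outer neighbor, and let p be the unique element of η having the same parity as the elements of α. Then (η \ {p}) ∪ {p − 1} and (η \ {p}) ∪ {p + 1} are two distinct tight stable n-sets all of whose elements have parity opposite to that of the elements of α, and each of them is adjacent to α in SG_{n,2}. -/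
/-! Auxiliary lemmas -/

lemma SKG_parAdd (n : ℕ) (x y : ZMod (2*n+2)) :
    parity n (x + y) = parity n x + parity n y := by
  simp only [parity]; exact map_add _ _ _

lemma SKG_parOne (n : ℕ) : parity n 1 = 1 := map_one _

lemma SKG_parSubOne (n : ℕ) (x : ZMod (2*n+2)) :
    parity n (x - 1) = parity n x + 1 := by
  have hz : ∀ z : ZMod 2, z - 1 = z + 1 := by decide
  simp only [parity]
  rw [map_sub, map_one, hz]

lemma SKG_parShift (n : ℕ) (j : ZMod (2*n+2)) (k : ℕ) :
    parity n (j + 2*(k:ZMod (2*n+2))) = parity n j := by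
  have h : (2*(k:ZMod (2*n+2))) = ((2*k : ℕ) : ZMod (2*n+2)) := by push_cast; ring
  rw [parity, map_add, h, map_natCast]
  have h2 : ((2*k : ℕ) : ZMod 2) = 0 := by
    rw [Nat.cast_mul]; exact mul_eq_zero_of_left (by decide) _
  rw [h2, add_zero]; rfl

lemma SKG_castInj (n : ℕ) {k₁ k₂ : ℕ} (h₁ : k₁ ≤ n) (h₂ : k₂ ≤ n) {j : ZMod (2*n+2)}
    (h : j + 2*(k₁:ZMod (2*n+2)) = j + 2*(k₂:ZMod (2*n+2))) : k₁ = k₂ := by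
  have h' : ((2*k₁ : ℕ) : ZMod (2*n+2)) = ((2*k₂:ℕ) : ZMod (2*n+2)) := by
    push_cast; exact add_left_cancel h
  have hv := congrArg ZMod.val h'
  rw [ZMod.val_natCast_of_lt (by omega), ZMod.val_natCast_of_lt (by omega)] at hv
  omega

lemma SKG_memT (n : ℕ) (j x : ZMod (2*n+2)) :
    x ∈ (Finset.range n).image (fun k : ℕ => j + 2*(k:ZMod (2*n+2))) ↔
      ∃ k, k < n ∧ x = j + 2*(k:ZMod (2*n+2)) := by
  constructor
  · intro hx
    obtain ⟨k, hk, he⟩ := Finset.mem_image.mp hx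
    exact ⟨k, Finset.mem_range.mp hk, he.symm⟩
  · rintro ⟨k, hk, rfl⟩
    exact Finset.mem_image.mpr ⟨k, Finset.mem_range.mpr hk, rfl⟩

lemma SKG_cardT (n : ℕ) (j : ZMod (2*n+2)) :
    ((Finset.range n).image (fun k : ℕ => j + 2*(k:ZMod (2*n+2)))).card = n := by
  rw [Finset.card_image_of_injOn, Finset.card_range]
  intro k₁ h₁ k₂ h₂ h
  exact SKG_castInj n (Finset.mem_range.mp h₁).le (Finset.mem_range.mp h₂).le h

lemma SKG_parT (n : ℕ) (j x : ZMod (2*n+2))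
    (hx : x ∈ (Finset.range n).image (fun k : ℕ => j + 2*(k:ZMod (2*n+2)))) :
    parity n x = parity n j := by
  obtain ⟨k, _, rfl⟩ := (SKG_memT n j x).mp hx
  exact SKG_parShift n j k

lemma SKG_stableT (n : ℕ) (j : ZMod (2*n+2)) :
    IsStable n ((Finset.range n).image (fun k : ℕ => j + 2*(k:ZMod (2*n+2)))) := by
  refine ⟨SKG_cardT n j, ?_⟩
  rintro x ⟨hx, hx1⟩
  have h1 : parity n (x + 1) = parity n j + 1 := by
    rw [SKG_parAdd, SKG_parOne, SKG_parT n j x hx]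
  have h2 : parity n (x + 1) = parity n j := SKG_parT n j _ hx1
  rw [h2] at h1
  exact one_ne_zero (by linear_combination -h1)

/-- Let `α` be a tight stable n-set, `η` its outer neighbor, and `p` the element
of `η` of the same parity as the elements of `α`. Then `(η \ {p}) ∪ {p - 1}` and
`(η \ {p}) ∪ {p + 1}` are two distinct tight stable n-sets of parity opposite
to `α`, each adjacent to `α` in `SG_{n,2}`. -/
theorem outer_neighbor_adjacent_tights (n : ℕ) (hn : 1 ≤ n)
    (α η : Finset (ZMod (2 * n + 2)))
    (hα : IsStable n α) (hαt : IsTight n α)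
    (hη : IsStable n η) (hout : OuterNbr n α η)
    (p : ZMod (2 * n + 2)) (hp : p ∈ η)
    (hpar : ∀ a ∈ α, parity n p = parity n a) :
    insert (p - 1) (η.erase p) ≠ insert (p + 1) (η.erase p) ∧
    IsStable n (insert (p - 1) (η.erase p)) ∧ IsTight n (insert (p - 1) (η.erase p)) ∧
    IsStable n (insert (p + 1) (η.erase p)) ∧ IsTight n (insert (p + 1) (η.erase p)) ∧
    (∀ b ∈ insert (p - 1) (η.erase p), ∀ a ∈ α, parity n b ≠ parity n a) ∧
    (∀ b ∈ insert (p + 1) (η.erase p), ∀ a ∈ α, parity n b ≠ parity n a) ∧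
    SGAdj n α (insert (p - 1) (η.erase p)) ∧
    SGAdj n α (insert (p + 1) (η.erase p)) := by
  obtain ⟨m, rfl⟩ : ∃ m, n = m + 1 := ⟨n - 1, by omega⟩
  obtain ⟨i, hi⟩ := hαt
  obtain ⟨hdisj, a, haα, hηeq⟩ := hout
  have hiα : i ∈ α := by
    rw [hi, SKG_memT]
    exact ⟨0, by omega, by simp⟩
  have hparα : ∀ x ∈ α, parity (m+1) x = parity (m+1) i := by
    intro x hx; rw [hi] at hx; exact SKG_parT _ _ _ hx
  have hpi : parity (m+1) p = parity (m+1) i := hpar i hiα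
  obtain ⟨k₀, hk₀, hak⟩ : ∃ k, k < m+1 ∧ a = i + 2*(k:ZMod (2*(m+1)+2)) := by
    rw [hi, SKG_memT] at haα; exact haα
  have hk₀m : k₀ = m := by
    by_contra hne
    have h1 : a + 2 ∈ η := by
      rw [hηeq]; exact Finset.mem_union_right _ (Finset.mem_singleton_self _)
    have h2 : a + 2 ∈ α := by
      rw [hi, SKG_memT]
      exact ⟨k₀+1, by omega, by rw [hak]; push_cast; ring⟩
    exact Finset.disjoint_left.mp hdisj h2 h1
  rw [hk₀m] at hak
  clear hk₀ hk₀m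
  have hpop : p ∉ oplus (m+1) (α.erase a) 1 := by
    intro hmem
    obtain ⟨b, hb, hbp⟩ := Finset.mem_image.mp hmem
    have hbα : b ∈ α := Finset.mem_of_mem_erase hb
    have hc : parity (m+1) p = parity (m+1) i + 1 := by
      rw [← hbp, SKG_parAdd, SKG_parOne, hparα b hbα]
    rw [hpi] at hc
    exact one_ne_zero (by linear_combination -hc)
  have hpa : p = a + 2 := by
    rw [hηeq, Finset.mem_union, Finset.mem_singleton] at hp
    tauto
  have herase : η.erase p = oplus (m+1) (α.erase a) 1 := by
    rw [hηeq, ← hpa, Finset.union_comm, ← Finset.insert_eq, Finset.erase_insert hpop]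
  have hS : η.erase p
      = (Finset.range m).image (fun k : ℕ => (i+1) + 2*(k:ZMod (2*(m+1)+2))) := by
    rw [herase]
    ext x
    rw [oplus, Finset.mem_image]
    constructor
    · rintro ⟨b, hb, rfl⟩
      rw [Finset.mem_erase, hi, SKG_memT] at hb
      obtain ⟨hba, k, hk, rfl⟩ := hb
      have hkm : k ≠ m := by
        rintro rfl; exact hba hak.symm
      exact Finset.mem_image.mpr ⟨k, Finset.mem_range.mpr (by omega), by ring⟩
    · intro hx
      obtain ⟨k, hk, rfl⟩ := Finset.mem_image.mp hx
      rw [Finset.mem_range] at hk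
      refine ⟨i + 2*(k:ZMod (2*(m+1)+2)), ?_, by ring⟩
      rw [Finset.mem_erase, hi, SKG_memT]
      refine ⟨?_, k, by omega, rfl⟩
      rw [hak]
      intro h
      have := SKG_castInj (m+1) (by omega) (by omega) h
      omega
  have h0 : (2*((m:ZMod (2*(m+1)+2)))+4 : ZMod (2*(m+1)+2)) = 0 := by
    have hz := ZMod.natCast_self (2*(m+1)+2)
    push_cast at hz
    linear_combination hz
  have hA : insert (p - 1) (η.erase p)
      = (Finset.range (m+1)).image (fun k : ℕ => (i+1) + 2*(k:ZMod (2*(m+1)+2))) := by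
    rw [hS, Finset.range_add_one, Finset.image_insert]
    congr 1
    rw [hpa, hak]; ring
  have hB : insert (p + 1) (η.erase p)
      = (Finset.range (m+1)).image (fun k : ℕ => (i-1) + 2*(k:ZMod (2*(m+1)+2))) := by
    rw [hS]
    ext x
    rw [Finset.mem_insert, SKG_memT]
    constructor
    · rintro (rfl | hx)
      · exact ⟨0, by omega, by rw [hpa, hak]; push_cast; linear_combination h0⟩
      · obtain ⟨k, hk, rfl⟩ := Finset.mem_image.mp hx
        rw [Finset.mem_range] at hk
        exact ⟨k+1, by omega, by push_cast; ring⟩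
    · rintro ⟨k, hk, rfl⟩
      rcases Nat.eq_zero_or_pos k with rfl | hkpos
      · left; rw [hpa, hak]; push_cast; linear_combination -h0
      · right
        refine Finset.mem_image.mpr ⟨k-1, Finset.mem_range.mpr (by omega), ?_⟩
        rw [Nat.cast_sub hkpos]; push_cast; ring
  have key1 : parity (m+1) (i+1) = parity (m+1) i + 1 := by
    rw [SKG_parAdd, SKG_parOne]
  have key2 : parity (m+1) (i-1) = parity (m+1) i + 1 := SKG_parSubOne (m+1) i
  have opp1 : ∀ b ∈ insert (p-1) (η.erase p), parity (m+1) b = parity (m+1) i + 1 := by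
    intro b hb; rw [hA] at hb; rw [SKG_parT _ _ _ hb]; exact key1
  have opp2 : ∀ b ∈ insert (p+1) (η.erase p), parity (m+1) b = parity (m+1) i + 1 := by
    intro b hb; rw [hB] at hb; rw [SKG_parT _ _ _ hb]; exact key2
  have hne12 : insert (p - 1) (η.erase p) ≠ insert (p + 1) (η.erase p) := by
    rw [hA, hB]
    intro h
    have hmem : (i+1) + 2*((m:ℕ):ZMod (2*(m+1)+2))
        ∈ (Finset.range (m+1)).image (fun k : ℕ => (i+1) + 2*(k:ZMod (2*(m+1)+2))) :=
      Finset.mem_image.mpr ⟨m, Finset.mem_range.mpr (by omega), rfl⟩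
    rw [h, SKG_memT] at hmem
    obtain ⟨k, hk, he⟩ := hmem
    have he' : (i-1) + 2*(((m+1):ℕ):ZMod (2*(m+1)+2))
        = (i-1) + 2*((k:ℕ):ZMod (2*(m+1)+2)) := by
      push_cast
      linear_combination he
    have := SKG_castInj (m+1) le_rfl (by omega) he'
    omega
  have hdis1 : Disjoint α (insert (p-1) (η.erase p)) := by
    rw [Finset.disjoint_left]
    intro x hx hxs
    have h1 := opp1 x hxs
    have h2 := hparα x hx
    exact one_ne_zero (by linear_combination h2 - h1)
  have hdis2 : Disjoint α (insert (p+1) (η.erase p)) := by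
    rw [Finset.disjoint_left]
    intro x hx hxs
    have h1 := opp2 x hxs
    have h2 := hparα x hx
    exact one_ne_zero (by linear_combination h2 - h1)
  have hst1 : IsStable (m+1) (insert (p-1) (η.erase p)) := by
    rw [hA]; exact SKG_stableT (m+1) (i+1)
  have hst2 : IsStable (m+1) (insert (p+1) (η.erase p)) := by
    rw [hB]; exact SKG_stableT (m+1) (i-1)
  have hneα1 : α ≠ insert (p-1) (η.erase p) := by
    intro h
    have := opp1 i (h ▸ hiα)
    exact one_ne_zero (by linear_combination -this)
  have hneα2 : α ≠ insert (p+1) (η.erase p) := by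
    intro h
    have := opp2 i (h ▸ hiα)
    exact one_ne_zero (by linear_combination -this)
  refine ⟨hne12, hst1, ⟨i+1, hA⟩, hst2, ⟨i-1, hB⟩, ?_, ?_, ⟨hα, hst1, hneα1, hdis1⟩,
    ⟨hα, hst2, hneα2, hdis2⟩⟩
  · intro b hb x hx heq
    rw [opp1 b hb, hparα x hx] at heq
    exact one_ne_zero (by linear_combination heq)
  · intro b hb x hx heq
    rw [opp2 b hb, hparα x hx] at heq
    exact one_ne_zero (by linear_combination heq)
end
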